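/- arXiv:1407.4094 — 4 statements merged into one kernel-verified Lean document; each statement's English description precedes it below -/
import Mathlib

section
/- Let G be a graph with two matchings M1 and M2 such that |M2| > |M1|. Then for any odd integer L ≥ 1, the symmetric difference M1 ⊗ M2 contains at least |M2| − (1 + 2/(L+1))·|M1| vertex-disjoint augmenting paths of length at most L that augment M1. -/
open Finset

set_option linter.unusedSectionVars false
set_option maxHeartbeats 1000000
variable {V : Type*} [Fintype V] [DecidableEq V]

/-- A matching: a set of edges (each of cardinality 2) that are pairwise disjoint. -/
def IsMatching (M : Finset (Finset V)) : Prop :=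
  (∀ e ∈ M, e.card = 2) ∧ ∀ e ∈ M, ∀ f ∈ M, e ≠ f → e ∩ f = ∅

/-- The list of edges of a path given by its list of vertices. -/
def pathEdges (vs : List V) : List (Finset V) :=
  List.zipWith (fun a b => ({a, b} : Finset V)) vs vs.tail


lemma pathEdges_length (vs : List V) : (pathEdges vs).length = vs.length - 1 := by
  simp [pathEdges]

lemma pathEdges_getElem (vs : List V) (i : ℕ) (h : i < (pathEdges vs).length)
    (h1 : i < vs.length) (h2 : i + 1 < vs.length) :
    (pathEdges vs)[i] = ({vs[i], vs[i+1]} : Finset V) := by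
  simp [pathEdges, List.getElem_zipWith, List.getElem_tail]

lemma lt_of_lt_pathEdges {vs : List V} {i : ℕ} (h : i < (pathEdges vs).length) :
    i + 1 < vs.length := by
  rw [pathEdges_length] at h; omega

lemma pathEdges_cons_cons (a b : V) (l : List V) :
    pathEdges (a :: b :: l) = ({a, b} : Finset V) :: pathEdges (b :: l) := by
  simp [pathEdges]

lemma pathEdges_append_singleton (l : List V) (hl : l ≠ []) (w : V) :
    pathEdges (l ++ [w]) = pathEdges l ++ [({l.getLast hl, w} : Finset V)] := by
  induction l with
  | nil => simp at hl
  | cons a l ih =>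
    cases l with
    | nil => simp [pathEdges]
    | cons b l' =>
      have : (a :: b :: l') ++ [w] = a :: b :: (l' ++ [w]) := rfl
      rw [this, pathEdges_cons_cons, show (b :: (l' ++ [w])) = (b::l') ++ [w] from rfl,
        ih (by simp), pathEdges_cons_cons]
      simp [List.getLast_cons]

lemma pathEdges_reverse (vs : List V) : pathEdges vs.reverse = (pathEdges vs).reverse := by
  induction vs with
  | nil => simp [pathEdges]
  | cons a l ih =>
    cases l with
    | nil => simp [pathEdges]
    | cons b l' =>
      rw [pathEdges_cons_cons, List.reverse_cons]
      rw [pathEdges_append_singleton _ (by simp) a]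
      rw [ih]
      simp [List.getLast_reverse, Finset.pair_comm]

-- membership of a vertex in an edge
lemma mem_edge_cases {vs : List V} {i : ℕ} (h : i < (pathEdges vs).length)
    (h1 : i < vs.length) (h2 : i + 1 < vs.length) {v : V}
    (hv : v ∈ (pathEdges vs)[i]) : v = vs[i] ∨ v = vs[i+1] := by
  rw [pathEdges_getElem vs i h h1 h2] at hv
  simpa using hv

lemma vert_mem_edge {vs : List V} {j : ℕ} (hj : j < vs.length) (h2 : 2 ≤ vs.length) :
    ∃ i, ∃ hi : i < (pathEdges vs).length, (i = j ∨ i + 1 = j) ∧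
      vs[j] ∈ (pathEdges vs)[i]'hi := by
  by_cases hlt : j < vs.length - 1
  · refine ⟨j, by rw [pathEdges_length]; omega, Or.inl rfl, ?_⟩
    rw [pathEdges_getElem vs j (by rw [pathEdges_length]; omega) (by omega) (by omega)]
    simp
  · refine ⟨j - 1, by rw [pathEdges_length]; omega, Or.inr (by omega), ?_⟩
    rw [pathEdges_getElem vs (j-1) (by rw [pathEdges_length]; omega) (by omega) (by omega)]
    have h : j - 1 + 1 = j := by omega
    simp only [h]
    simp

lemma nodup_pathEdges {vs : List V} (h : vs.Nodup) : (pathEdges vs).Nodup := by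
  have key : ∀ i j (hi : i < (pathEdges vs).length) (hj : j < (pathEdges vs).length),
      i < j → (pathEdges vs)[i]'hi ≠ (pathEdges vs)[j]'hj := by
    intro i j hi hj hlt heq
    have h1 : vs[i]'(by have := lt_of_lt_pathEdges hi; omega) ∈ (pathEdges vs)[j]'hj := by
      rw [← heq,
        pathEdges_getElem vs i hi (by have := lt_of_lt_pathEdges hi; omega) (lt_of_lt_pathEdges hi)]
      simp
    rcases mem_edge_cases hj (by have := lt_of_lt_pathEdges hj; omega) (lt_of_lt_pathEdges hj) h1 with hc | hc <;>
    · rw [h.getElem_inj_iff] at hc; omega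
  rw [List.nodup_iff_injective_getElem]
  rintro ⟨i, hi⟩ ⟨j, hj⟩ hij
  dsimp only at hij
  rcases lt_trichotomy i j with hlt | heq | hgt
  · exact absurd hij (key i j hi hj hlt)
  · exact Fin.ext heq
  · exact absurd hij.symm (key j i hj hi hgt)

-- the last vertex is only in the last edge
lemma last_mem_edge_eq {vs : List V} (hnd : vs.Nodup) {i : ℕ} (hi : i < (pathEdges vs).length)
    (hl : vs.length - 1 < vs.length)
    (hv : vs[vs.length - 1] ∈ (pathEdges vs)[i]) :
    i = vs.length - 2 := by
  have h2 := lt_of_lt_pathEdges hi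
  rcases mem_edge_cases hi (by omega) h2 hv with hc | hc <;>
  · rw [hnd.getElem_inj_iff] at hc
    rw [pathEdges_length] at hi
    omega

/-- An augmenting path for the matching `M1` inside the symmetric difference `M1 ⊗ M2`:
an alternating path (even-indexed edges in `M2 \ M1`, odd-indexed edges in `M1 \ M2`) of
odd length whose first and last edges belong to `M2` and whose endpoints are unmatched
by `M1`; applying it increases `|M1|` by one. -/
structure AugPath (M1 M2 : Finset (Finset V)) where
  verts : List V
  nodup : verts.Nodup
  len_odd : Odd (pathEdges verts).length
  alt : ∀ i, (h : i < (pathEdges verts).length) →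
    if i % 2 = 0 then
      (pathEdges verts).get ⟨i, h⟩ ∈ M2 ∧ (pathEdges verts).get ⟨i, h⟩ ∉ M1
    else
      (pathEdges verts).get ⟨i, h⟩ ∈ M1 ∧ (pathEdges verts).get ⟨i, h⟩ ∉ M2
  ends_unmatched : ∀ v : V, (verts.head? = some v ∨ verts.getLast? = some v) →
    ∀ e ∈ M1, v ∉ e

/-- The length of an augmenting path is its number of edges. -/
def AugPath.length {M1 M2 : Finset (Finset V)} (P : AugPath M1 M2) : ℕ :=
  (pathEdges P.verts).length

/-- Alternating path: even-indexed edges in `X`, odd-indexed edges in `Y`. -/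
def Alt (X Y : Finset (Finset V)) (vs : List V) : Prop :=
  ∀ i : ℕ, ∀ hi : i < (pathEdges vs).length,
    (pathEdges vs)[i]'hi ∈ (if i % 2 = 0 then X else Y)

/-- The tail of the path cannot be extended. -/
def TailStuck (X Y : Finset (Finset V)) (vs : List V) : Prop :=
  ∀ g ∈ (if (pathEdges vs).length % 2 = 0 then X else Y), ∀ v, vs.getLast? = some v → v ∉ g

lemma extendTail (X Y : Finset (Finset V)) (hX : IsMatching X) (hY : IsMatching Y)
    (hXY : Disjoint X Y) :
    ∀ fuel : ℕ, ∀ vs : List V, vs.Nodup → 2 ≤ vs.length → Alt X Y vs →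
    Fintype.card V + 1 ≤ vs.length + fuel →
    ∃ ws : List V, vs <+: ws ∧ ws.Nodup ∧ 2 ≤ ws.length ∧ Alt X Y ws ∧
      (TailStuck X Y ws ∨
        ∃ g ∈ Y, (pathEdges ws).length % 2 = 1 ∧ g ∉ pathEdges ws ∧
          (∀ v ∈ g, ws.head? = some v ∨ ws.getLast? = some v) ∧
          (∀ v, ws.head? = some v → v ∈ g) ∧ (∀ v, ws.getLast? = some v → v ∈ g)) := by
  intro fuel
  induction fuel with
  | zero =>
    intro vs hnd h2 _ hfuel
    have := hnd.length_le_card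
    omega
  | succ fuel ih =>
    intro vs hnd h2 halt hfuel
    have hvs_ne : vs ≠ [] := by intro h; rw [h] at h2; simp at h2
    set n := vs.length with hn
    have hk : (pathEdges vs).length = n - 1 := pathEdges_length vs
    set t := vs.getLast hvs_ne with ht
    have htget : t = vs[n-1]'(by omega) := List.getLast_eq_getElem hvs_ne
    set Z := if (n - 1) % 2 = 0 then X else Y with hZ
    have hZXY : Z = X ∨ Z = Y := by rw [hZ]; split <;> simp
    have hZmatch : IsMatching Z := by rcases hZXY with h | h <;> rw [h] <;> assumption
    by_cases hstuck : ∀ g ∈ Z, t ∉ g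
    · refine ⟨vs, List.prefix_refl vs, hnd, h2, halt, Or.inl ?_⟩
      intro g hg v hv
      rw [List.getLast?_eq_getLast hvs_ne] at hv
      have : v = t := (Option.some.inj hv).symm
      subst this
      rw [hk] at hg
      exact hstuck g hg
    · push_neg at hstuck
      obtain ⟨g, hgZ, htg⟩ := hstuck
      obtain ⟨a, b, hab, hgab⟩ := Finset.card_eq_two.mp (hZmatch.1 g hgZ)
      -- get the other endpoint w of g
      obtain ⟨w, hwt, hgtw⟩ : ∃ w, w ≠ t ∧ g = {t, w} := by
        rw [hgab] at htg
        simp only [Finset.mem_insert, Finset.mem_singleton] at htg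
        rcases htg with rfl | rfl
        · exact ⟨b, fun h => hab h.symm, hgab⟩
        · exact ⟨a, fun h => hab h, by rw [hgab, Finset.pair_comm]⟩
      -- g is not an edge of the path
      have hgnot : g ∉ pathEdges vs := by
        intro hmem
        obtain ⟨i, hi, hig⟩ := List.mem_iff_getElem.mp hmem
        have htmem : vs[vs.length - 1]'(by omega) ∈ (pathEdges vs)[i] := by
          have he : (vs[vs.length - 1]'(by omega) : V) = t := htget.symm
          rw [he, hig, hgtw]; simp
        have hieq := last_mem_edge_eq hnd hi (by omega) htmem
        have htype := halt i hi
        rw [hig] at htype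
        rw [← hn] at hieq
        -- i = n-2, edge type opposite parity from Z
        have hk1 : 2 ≤ n := h2
        rcases hZXY with hZX | hZY
        · rw [hZX] at hgZ
          have : ¬ (n - 1) % 2 = 1 := by
            intro hodd; rw [hZ] at hZX; simp [show ¬ (n-1)%2 = 0 by omega] at hZX
            exact hXY.forall_ne_finset hgZ (hZX ▸ hgZ) rfl
          have hi2 : i % 2 = 1 := by omega
          rw [if_neg (by omega)] at htype
          exact hXY.forall_ne_finset hgZ htype rfl
        · rw [hZY] at hgZ
          have : ¬ (n - 1) % 2 = 0 := by
            intro heven; rw [hZ, if_pos heven] at hZY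
            exact hXY.forall_ne_finset (hZY ▸ hgZ) hgZ rfl
          have hi2 : i % 2 = 0 := by omega
          rw [if_pos hi2] at htype
          exact hXY.forall_ne_finset htype hgZ rfl
      by_cases hwvs : w ∈ vs
      · -- w is already on the path: cycle case or contradiction
        obtain ⟨j, hj, hjw⟩ := List.mem_iff_getElem.mp hwvs
        -- adjacent edge of the same type as Z at w leads to contradiction
        have hadj : ∀ i, ∀ hi : i < (pathEdges vs).length, w ∈ (pathEdges vs)[i]'hi →
            i % 2 = (n-1) % 2 → False := by
          intro i hi hwi hpar
          have htype := halt i hi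
          have hZt : (if i % 2 = 0 then X else Y) = Z := by
            rw [hZ]; rcases Nat.mod_two_eq_zero_or_one i with h | h <;> simp [h, ← hpar]
          rw [hZt] at htype
          have hne : g ≠ (pathEdges vs)[i]'hi := fun h => hgnot (h ▸ List.getElem_mem hi)
          have := hZmatch.2 g hgZ _ htype hne
          have hwg : w ∈ g := by rw [hgtw]; simp
          have : w ∈ g ∩ (pathEdges vs)[i]'hi := Finset.mem_inter.mpr ⟨hwg, hwi⟩
          rw [‹g ∩ _ = ∅›] at this
          simp at this
        by_cases hjpar : j % 2 = (n-1) % 2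
        · -- edge j has type Z (if it exists); j = n-1 means w = t
          have hjn : j ≠ n - 1 := by
            intro h
            apply hwt
            rw [← hjw, htget]
            congr 1
          have hjlt : j < (pathEdges vs).length := by omega
          have : w ∈ (pathEdges vs)[j]'hjlt := by
            rw [pathEdges_getElem vs j hjlt (by omega) (by omega), ← hjw]; simp
          exact absurd (hadj j hjlt this hjpar) (by simp)
        · -- edge j-1 has type Z (if it exists); j = 0 means cycle
          by_cases hj0 : j = 0
          · -- cycle!
            subst hj0
            have hkodd : (n - 1) % 2 = 1 := by omega
            have hgY : g ∈ Y := by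
              have hZY' : Z = Y := by rw [hZ]; exact if_neg (by omega)
              exact hZY' ▸ hgZ
            refine ⟨vs, List.prefix_refl vs, hnd, h2, halt, Or.inr ⟨g, hgY, by omega, hgnot,
              ?_, ?_, ?_⟩⟩
            · intro v hv
              rw [hgtw] at hv
              simp only [Finset.mem_insert, Finset.mem_singleton] at hv
              rcases hv with rfl | rfl
              · right; rw [List.getLast?_eq_getLast hvs_ne]
              · left
                rw [List.head?_eq_head hvs_ne]
                rw [List.head_eq_getElem_zero hvs_ne, hjw]
            · intro v hv
              rw [List.head?_eq_head hvs_ne] at hv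
              have hv' : v = vs.head hvs_ne := (Option.some.inj hv).symm
              subst hv'
              rw [List.head_eq_getElem_zero hvs_ne, hjw, hgtw]; simp
            · intro v hv
              rw [List.getLast?_eq_getLast hvs_ne] at hv
              have hv' : v = t := (Option.some.inj hv).symm
              subst hv'
              rw [hgtw]; simp
          · have hjlt : j - 1 < (pathEdges vs).length := by omega
            have : w ∈ (pathEdges vs)[j-1]'hjlt := by
              rw [pathEdges_getElem vs (j-1) hjlt (by omega) (by omega)]
              simp only [show j - 1 + 1 = j from by omega, hjw]
              simp
            exact absurd (hadj (j-1) hjlt this (by omega)) (by simp)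
      · -- extend the path by w
        have hnd' : (vs ++ [w]).Nodup := by
          rw [List.nodup_append]
          exact ⟨hnd, List.nodup_singleton w,
            fun x hx y hy hxy => by rw [List.mem_singleton] at hy; subst hy; subst hxy; exact hwvs hx⟩
        have hpe : pathEdges (vs ++ [w]) = pathEdges vs ++ [g] := by
          rw [pathEdges_append_singleton vs hvs_ne w, ← ht, ← hgtw]
        have halt' : Alt X Y (vs ++ [w]) := by
          intro i hi
          have hi' : i < (pathEdges vs).length + 1 := by
            rw [hpe, List.length_append] at hi; simpa using hi
          by_cases hilt : i < (pathEdges vs).length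
          · have : (pathEdges (vs ++ [w]))[i]'hi = (pathEdges vs)[i]'hilt := by
              simp only [hpe]
              exact List.getElem_append_left _
            rw [this]
            exact halt i hilt
          · have hieq : i = (pathEdges vs).length := by omega
            have : (pathEdges (vs ++ [w]))[i]'hi = g := by
              simp only [hpe]
              rw [List.getElem_append_right (by omega)]
              simp [hieq]
            rw [this, hieq, hk]
            exact hgZ
        obtain ⟨ws, hpre, h⟩ := ih (vs ++ [w]) hnd' (by simp; omega) halt'
          (by simp; omega)
        exact ⟨ws, (List.prefix_append vs [w]).trans hpre, h⟩



lemma matching_eq_of_mem {M : Finset (Finset V)} (hM : IsMatching M) {e f : Finset V} {v : V}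
    (he : e ∈ M) (hf : f ∈ M) (hv : v ∈ e) (hv' : v ∈ f) : e = f := by
  by_contra hne
  have := hM.2 e he f hf hne
  have : v ∈ e ∩ f := Finset.mem_inter.mpr ⟨hv, hv'⟩
  rw [‹e ∩ f = ∅›] at this
  simp at this

lemma mem_pathEdges_mono {vs ws : List V} (h : vs <+: ws) {e : Finset V}
    (he : e ∈ pathEdges vs) : e ∈ pathEdges ws := by
  obtain ⟨i, hi, rfl⟩ := List.mem_iff_getElem.mp he
  have hi2 := lt_of_lt_pathEdges hi
  have hlen := h.length_le
  have hiw : i < (pathEdges ws).length := by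
    rw [pathEdges_length] at *; omega
  refine List.mem_iff_getElem.mpr ⟨i, hiw, ?_⟩
  rw [pathEdges_getElem ws i hiw (by omega) (by rw [pathEdges_length] at hiw; omega),
    pathEdges_getElem vs i hi (by omega) hi2]
  obtain ⟨t, rfl⟩ := h
  rw [List.getElem_append_left (by omega), List.getElem_append_left (by omega)]

lemma head?_of_prefix {vs ws : List V} (h : vs <+: ws) (hne : vs ≠ []) :
    ws.head? = vs.head? := by
  obtain ⟨t, rfl⟩ := h
  cases vs with
  | nil => simp at hne
  | cons a l => rfl

lemma alt_reverse_odd {X Y : Finset (Finset V)} {vs : List V} (h : Alt X Y vs)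
    (hodd : (pathEdges vs).length % 2 = 1) : Alt X Y vs.reverse := by
  intro i hi
  have hlen : (pathEdges vs.reverse).length = (pathEdges vs).length := by
    rw [pathEdges_reverse, List.length_reverse]
  have hi' : i < (pathEdges vs).length := by omega
  have : (pathEdges vs.reverse)[i]'hi =
      (pathEdges vs)[(pathEdges vs).length - 1 - i]'(by omega) := by
    simp only [pathEdges_reverse]
    rw [List.getElem_reverse]
  rw [this]
  have := h ((pathEdges vs).length - 1 - i) (by omega)
  rcases Nat.mod_two_eq_zero_or_one i with hp | hp
  · have hp2 : ((pathEdges vs).length - 1 - i) % 2 = 0 := by omega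
    rw [hp2] at this
    rw [hp]
    simpa using this
  · have hp2 : ((pathEdges vs).length - 1 - i) % 2 = 1 := by omega
    rw [hp2] at this
    rw [hp]
    simpa using this

lemma alt_reverse_even {X Y : Finset (Finset V)} {vs : List V} (h : Alt X Y vs)
    (heven : (pathEdges vs).length % 2 = 0) : Alt Y X vs.reverse := by
  intro i hi
  have hlen : (pathEdges vs.reverse).length = (pathEdges vs).length := by
    rw [pathEdges_reverse, List.length_reverse]
  have hi' : i < (pathEdges vs).length := by omega
  have : (pathEdges vs.reverse)[i]'hi =
      (pathEdges vs)[(pathEdges vs).length - 1 - i]'(by omega) := by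
    simp only [pathEdges_reverse]
    rw [List.getElem_reverse]
  rw [this]
  have := h ((pathEdges vs).length - 1 - i) (by omega)
  rcases Nat.mod_two_eq_zero_or_one i with hp | hp
  · have hp2 : ((pathEdges vs).length - 1 - i) % 2 = 1 := by omega
    rw [hp2] at this
    rw [hp]
    simpa using this
  · have hp2 : ((pathEdges vs).length - 1 - i) % 2 = 0 := by omega
    rw [hp2] at this
    rw [hp]
    simpa using this

lemma head?_getElem {vs : List V} (h : vs ≠ []) :
    vs.head? = some (vs[0]'(List.length_pos_iff.mpr h)) := by
  rw [List.head?_eq_head h, List.head_eq_getElem_zero h]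

lemma getLast?_getElem {vs : List V} (h : vs ≠ []) :
    vs.getLast? = some (vs[vs.length - 1]'(by have := List.length_pos_iff.mpr h; omega)) := by
  rw [List.getLast?_eq_getLast h, List.getLast_eq_getElem]

/-- Every vertex of a maximal (both ends stuck) alternating path has all its
incident `X ∪ Y`-edges on the path. -/
lemma covered_path {X Y : Finset (Finset V)} (hX : IsMatching X) (hY : IsMatching Y)
    {ms : List V} (h2 : 2 ≤ ms.length) (halt : Alt X Y ms)
    (hhead : ∀ g ∈ Y, ∀ v, ms.head? = some v → v ∉ g)
    (htail : TailStuck X Y ms) :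
    ∀ j, ∀ hj : j < ms.length, ∀ g, g ∈ X ∪ Y → ms[j] ∈ g → g ∈ pathEdges ms := by
  intro j hj g hgXY hvg
  have hne : ms ≠ [] := by intro h; rw [h] at h2; simp at h2
  have hk : (pathEdges ms).length = ms.length - 1 := pathEdges_length ms
  rcases Finset.mem_union.mp hgXY with hgX | hgY
  · by_cases hje : j % 2 = 0
    · by_cases hjlt : j < ms.length - 1
      · have hedge : j < (pathEdges ms).length := by omega
        have h1 : ms[j] ∈ (pathEdges ms)[j]'hedge := by
          rw [pathEdges_getElem ms j hedge (by omega) (by omega)]; simp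
        have htype := halt j hedge
        rw [if_pos hje] at htype
        rw [matching_eq_of_mem hX hgX htype hvg h1]
        exact List.getElem_mem hedge
      · exfalso
        have hjeq : j = ms.length - 1 := by omega
        have hstuck := htail g (by rw [hk, if_pos (by omega)]; exact hgX) ms[j]
        subst hjeq
        exact hstuck (getLast?_getElem hne) hvg
    · have hedge : j - 1 < (pathEdges ms).length := by omega
      have h1 : ms[j] ∈ (pathEdges ms)[j-1]'hedge := by
        rw [pathEdges_getElem ms (j-1) hedge (by omega) (by omega)]
        simp only [show j - 1 + 1 = j from by omega]
        simp
      have htype := halt (j-1) hedge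
      rw [if_pos (by omega)] at htype
      rw [matching_eq_of_mem hX hgX htype hvg h1]
      exact List.getElem_mem hedge
  · by_cases hje : j % 2 = 0
    · by_cases hj0 : j = 0
      · exfalso
        subst hj0
        exact hhead g hgY ms[0] (head?_getElem hne) hvg
      · have hedge : j - 1 < (pathEdges ms).length := by omega
        have h1 : ms[j] ∈ (pathEdges ms)[j-1]'hedge := by
          rw [pathEdges_getElem ms (j-1) hedge (by omega) (by omega)]
          simp only [show j - 1 + 1 = j from by omega]
          simp
        have htype := halt (j-1) hedge
        rw [if_neg (by omega)] at htype
        rw [matching_eq_of_mem hY hgY htype hvg h1]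
        exact List.getElem_mem hedge
    · by_cases hjlt : j < ms.length - 1
      · have hedge : j < (pathEdges ms).length := by omega
        have h1 : ms[j] ∈ (pathEdges ms)[j]'hedge := by
          rw [pathEdges_getElem ms j hedge (by omega) (by omega)]; simp
        have htype := halt j hedge
        rw [if_neg (by omega)] at htype
        rw [matching_eq_of_mem hY hgY htype hvg h1]
        exact List.getElem_mem hedge
      · exfalso
        have hjeq : j = ms.length - 1 := by omega
        have hstuck := htail g (by rw [hk, if_neg (by omega)]; exact hgY) ms[j]
        subst hjeq
        exact hstuck (getLast?_getElem hne) hvg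

/-- Every vertex of an alternating cycle has all its incident `X ∪ Y`-edges on the cycle. -/
lemma covered_cycle {X Y : Finset (Finset V)} (hX : IsMatching X) (hY : IsMatching Y)
    {ms : List V} {g : Finset V} (h2 : 2 ≤ ms.length) (halt : Alt X Y ms)
    (hkodd : (pathEdges ms).length % 2 = 1) (hgY : g ∈ Y)
    (hg0 : ms[0]'(by omega) ∈ g)
    (hglast : ms[ms.length - 1]'(by omega) ∈ g) :
    ∀ j, ∀ hj : j < ms.length, ∀ h, h ∈ X ∪ Y → ms[j] ∈ h →
      h ∈ pathEdges ms ∨ h = g := by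
  intro j hj h hgXY hvg
  have hk : (pathEdges ms).length = ms.length - 1 := pathEdges_length ms
  rcases Finset.mem_union.mp hgXY with hgX | hgY'
  · left
    by_cases hje : j % 2 = 0
    · have hjlt : j < ms.length - 1 := by omega
      have hedge : j < (pathEdges ms).length := by omega
      have h1 : ms[j] ∈ (pathEdges ms)[j]'hedge := by
        rw [pathEdges_getElem ms j hedge (by omega) (by omega)]; simp
      have htype := halt j hedge
      rw [if_pos hje] at htype
      rw [matching_eq_of_mem hX hgX htype hvg h1]
      exact List.getElem_mem hedge
    · have hedge : j - 1 < (pathEdges ms).length := by omega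
      have h1 : ms[j] ∈ (pathEdges ms)[j-1]'hedge := by
        rw [pathEdges_getElem ms (j-1) hedge (by omega) (by omega)]
        simp only [show j - 1 + 1 = j from by omega]
        simp
      have htype := halt (j-1) hedge
      rw [if_pos (by omega)] at htype
      rw [matching_eq_of_mem hX hgX htype hvg h1]
      exact List.getElem_mem hedge
  · by_cases hje : j % 2 = 0
    · by_cases hj0 : j = 0
      · right
        subst hj0
        exact matching_eq_of_mem hY hgY' hgY hvg hg0
      · left
        have hedge : j - 1 < (pathEdges ms).length := by omega
        have h1 : ms[j] ∈ (pathEdges ms)[j-1]'hedge := by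
          rw [pathEdges_getElem ms (j-1) hedge (by omega) (by omega)]
          simp only [show j - 1 + 1 = j from by omega]
          simp
        have htype := halt (j-1) hedge
        rw [if_neg (by omega)] at htype
        rw [matching_eq_of_mem hY hgY' htype hvg h1]
        exact List.getElem_mem hedge
    · by_cases hjlt : j < ms.length - 1
      · left
        have hedge : j < (pathEdges ms).length := by omega
        have h1 : ms[j] ∈ (pathEdges ms)[j]'hedge := by
          rw [pathEdges_getElem ms j hedge (by omega) (by omega)]; simp
        have htype := halt j hedge
        rw [if_neg (by omega)] at htype
        rw [matching_eq_of_mem hY hgY' htype hvg h1]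
        exact List.getElem_mem hedge
      · right
        have hjeq : j = ms.length - 1 := by omega
        refine matching_eq_of_mem hY hgY' hgY hvg ?_
        subst hjeq
        exact hglast

/-- Counting the `X`- and `Y`-edges of an alternating edge list. -/
lemma card_inter_alt :
    ∀ (es : List (Finset V)) (X Y : Finset (Finset V)), Disjoint X Y → es.Nodup →
    (∀ i, ∀ hi : i < es.length, es[i]'hi ∈ (if i % 2 = 0 then X else Y)) →
    (X ∩ es.toFinset).card = (es.length + 1) / 2 ∧
      (Y ∩ es.toFinset).card = es.length / 2 := by
  intro es
  induction es with
  | nil => intro X Y _ _ _; simp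
  | cons c es' ih =>
    intro X Y hd hnd halt
    have hcX : c ∈ X := by have := halt 0 (by simp); rw [if_pos rfl, List.getElem_cons_zero] at this; exact this
    have hcY : c ∉ Y := fun h => hd.forall_ne_finset hcX h rfl
    have hcS : c ∉ es'.toFinset := by
      simp only [List.mem_toFinset]
      exact (List.nodup_cons.mp hnd).1
    have halt' : ∀ i, ∀ hi : i < es'.length, es'[i]'hi ∈ (if i % 2 = 0 then Y else X) := by
      intro i hi
      have := halt (i+1) (by simp; omega)
      rw [List.getElem_cons_succ] at this
      rcases Nat.mod_two_eq_zero_or_one i with hp | hp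
      · rw [if_pos hp]
        rwa [if_neg (by omega)] at this
      · rw [if_neg (by omega)]
        rwa [if_pos (by omega)] at this
    obtain ⟨ihY, ihX⟩ := ih Y X hd.symm (List.nodup_cons.mp hnd).2 halt'
    constructor
    · have hX : X ∩ (c :: es').toFinset = insert c (X ∩ es'.toFinset) := by
        ext z
        simp only [List.toFinset_cons, Finset.mem_inter, Finset.mem_insert, List.mem_toFinset]
        constructor
        · rintro ⟨hz, rfl | hz2⟩
          · exact Or.inl rfl
          · exact Or.inr ⟨hz, hz2⟩
        · rintro (rfl | ⟨hz, hz2⟩)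
          · exact ⟨hcX, Or.inl rfl⟩
          · exact ⟨hz, Or.inr hz2⟩
      rw [hX, Finset.card_insert_of_notMem (fun h => hcS (Finset.mem_inter.mp h).2), ihX]
      have : (c :: es').length = es'.length + 1 := rfl
      omega
    · have hY : Y ∩ (c :: es').toFinset = Y ∩ es'.toFinset := by
        ext z
        simp only [List.toFinset_cons, Finset.mem_inter, Finset.mem_insert, List.mem_toFinset]
        constructor
        · rintro ⟨hz, rfl | hz2⟩
          · exact absurd hz hcY
          · exact ⟨hz, hz2⟩
        · rintro ⟨hz, hz2⟩
          exact ⟨hz, Or.inr hz2⟩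
      rw [hY, ihY]
      have : (c :: es').length = es'.length + 1 := rfl
      omega


lemma edges_mem_union {X Y : Finset (Finset V)} {ms : List V} (halt : Alt X Y ms) :
    ∀ f ∈ pathEdges ms, f ∈ X ∪ Y := by
  intro f hf
  obtain ⟨i, hi, rfl⟩ := List.mem_iff_getElem.mp hf
  have := halt i hi
  split at this
  · exact Finset.mem_union_left _ this
  · exact Finset.mem_union_right _ this

lemma covered_assemble {ms : List V} (h2 : 2 ≤ ms.length) (S : Finset (Finset V))
    (hcov : ∀ j, ∀ hj : j < ms.length, ∀ g, g ∈ S → ms[j] ∈ g → g ∈ pathEdges ms) :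
    ∀ f ∈ (pathEdges ms).toFinset, ∀ v ∈ f, ∀ g, g ∈ S → v ∈ g →
      g ∈ (pathEdges ms).toFinset := by
  intro f hf v hv g hg hvg
  rw [List.mem_toFinset] at hf
  obtain ⟨i, hi, rfl⟩ := List.mem_iff_getElem.mp hf
  have hi2 := lt_of_lt_pathEdges hi
  rcases mem_edge_cases hi (by omega) hi2 hv with hveq | hveq <;>
    (subst hveq; rw [List.mem_toFinset])
  · exact hcov i (by omega) g hg hvg
  · exact hcov (i+1) (by omega) g hg hvg

/-- Extraction of the connected component (of the symmetric difference graph) containing a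
given edge `e ∈ B`. -/
lemma get_component (A B : Finset (Finset V)) (hA : IsMatching A) (hB : IsMatching B)
    (hd : Disjoint A B) {e : Finset V} (he : e ∈ B) :
    ∃ E : Finset (Finset V), e ∈ E ∧ (∀ f ∈ E, f ∈ A ∪ B) ∧
      (∀ f ∈ E, ∀ v ∈ f, ∀ g, g ∈ A ∪ B → v ∈ g → g ∈ E) ∧
      ((B ∩ E).card ≤ (A ∩ E).card ∨
        ∃ ms : List V, ms.Nodup ∧ E = (pathEdges ms).toFinset ∧ Alt B A ms ∧
          (pathEdges ms).length = 2 * (A ∩ E).card + 1 ∧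
          (B ∩ E).card = (A ∩ E).card + 1 ∧
          (∀ g ∈ A, ∀ v, (ms.head? = some v ∨ ms.getLast? = some v) → v ∉ g)) := by
  obtain ⟨x, y, hxy, hexy⟩ := Finset.card_eq_two.mp (hB.1 e he)
  have hpe0 : pathEdges [x, y] = [({x, y} : Finset V)] := rfl
  have hnd0 : ([x, y] : List V).Nodup := by simp [hxy]
  have halt0 : Alt B A [x, y] := by
    intro i hi
    have hi0 : i = 0 := by rw [pathEdges_length] at hi; simp at hi; exact hi
    subst hi0
    have hget : (pathEdges [x, y])[0]'hi = ({x, y} : Finset V) := rfl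
    rw [if_pos rfl, hget]
    exact hexy ▸ he
  obtain ⟨ws, hpre1, hnd1, hlen1, halt1, hsc1⟩ := extendTail B A hB hA hd.symm
    (Fintype.card V) [x, y] hnd0 (by simp) halt0 (by simp)
  have hws_ne : ws ≠ [] := by intro h; rw [h] at hlen1; simp at hlen1
  have hews : e ∈ pathEdges ws := by
    apply mem_pathEdges_mono hpre1
    rw [hpe0, hexy]
    simp
  have hk1 : (pathEdges ws).length = ws.length - 1 := pathEdges_length ws
  have hpend1 := nodup_pathEdges hnd1
  rcases hsc1 with hts1 | ⟨g, hgA, hkodd, hgnot, hgsub, hghead, hglast⟩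
  · -- phase 1 got stuck; reverse and extend again
    set k1 := (pathEdges ws).length with hk1def
    set rs := ws.reverse with hrs
    have hrs_ne : rs ≠ [] := by simpa [hrs] using hws_ne
    have hndr : rs.Nodup := List.nodup_reverse.mpr hnd1
    have hlenr : 2 ≤ rs.length := by rw [hrs, List.length_reverse]; exact hlen1
    have hrshead : rs.head? = ws.getLast? := List.head?_reverse
    have hpers : pathEdges rs = (pathEdges ws).reverse := pathEdges_reverse ws
    by_cases hk1par : k1 % 2 = 1
    · -- reversed path still alternates B, A
      have haltr : Alt B A rs := alt_reverse_odd halt1 hk1par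
      have hstuck1 : ∀ g ∈ A, ∀ v, ws.getLast? = some v → v ∉ g := by
        intro g hg v hv
        exact hts1 g (by rw [← hk1def, if_neg (by omega)]; exact hg) v hv
      obtain ⟨ms, hpre2, hnd2, hlen2, halt2, hsc2⟩ := extendTail B A hB hA hd.symm
        (Fintype.card V) rs hndr hlenr haltr (by omega)
      have hms_ne : ms ≠ [] := by intro h; rw [h] at hlen2; simp at hlen2
      have hmshead : ms.head? = ws.getLast? := by
        rw [head?_of_prefix hpre2 hrs_ne, hrshead]
      have hheadstuck : ∀ g ∈ A, ∀ v, ms.head? = some v → v ∉ g := by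
        intro g hg v hv
        exact hstuck1 g hg v (hmshead ▸ hv)
      rcases hsc2 with hts2 | ⟨g, hgA, _, _, _, hghead2, _⟩
      swap
      · exfalso
        exact hheadstuck g hgA (ms.head hms_ne) (List.head?_eq_head hms_ne)
          (hghead2 _ (List.head?_eq_head hms_ne))
      -- maximal path case, alternation B, A
      set m := (pathEdges ms).length with hmdef
      have hkm : m = ms.length - 1 := pathEdges_length ms
      have hems : e ∈ pathEdges ms := by
        apply mem_pathEdges_mono hpre2
        rw [hpers, List.mem_reverse]
        exact hews
      have hpend2 := nodup_pathEdges hnd2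
      have hcards := card_inter_alt (pathEdges ms) B A hd.symm hpend2 halt2
      have hcov0 := covered_path hB hA hlen2 halt2 hheadstuck hts2
      refine ⟨(pathEdges ms).toFinset, List.mem_toFinset.mpr hems, ?_, ?_, ?_⟩
      · intro f hf
        rw [Finset.union_comm]
        exact edges_mem_union halt2 f (List.mem_toFinset.mp hf)
      · exact covered_assemble hlen2 (A ∪ B) (fun j hj g hg hvg =>
          hcov0 j hj g (by rwa [Finset.union_comm]) hvg)
      · by_cases hm : m % 2 = 1
        · right
          refine ⟨ms, hnd2, rfl, halt2, by omega, by omega, ?_⟩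
          rintro g hg v (hv | hv)
          · exact hheadstuck g hg v hv
          · exact hts2 g (by rw [← hmdef, if_neg (by omega)]; exact hg) v hv
        · left
          omega
    · -- reversed path alternates A, B
      have haltr : Alt A B rs := alt_reverse_even halt1 (by omega)
      have hstuck1 : ∀ g ∈ B, ∀ v, ws.getLast? = some v → v ∉ g := by
        intro g hg v hv
        exact hts1 g (by rw [← hk1def, if_pos (by omega)]; exact hg) v hv
      obtain ⟨ms, hpre2, hnd2, hlen2, halt2, hsc2⟩ := extendTail A B hA hB hd
        (Fintype.card V) rs hndr hlenr haltr (by omega)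
      have hms_ne : ms ≠ [] := by intro h; rw [h] at hlen2; simp at hlen2
      have hmshead : ms.head? = ws.getLast? := by
        rw [head?_of_prefix hpre2 hrs_ne, hrshead]
      have hheadstuck : ∀ g ∈ B, ∀ v, ms.head? = some v → v ∉ g := by
        intro g hg v hv
        exact hstuck1 g hg v (hmshead ▸ hv)
      rcases hsc2 with hts2 | ⟨g, hgB, _, _, _, hghead2, _⟩
      swap
      · exfalso
        exact hheadstuck g hgB (ms.head hms_ne) (List.head?_eq_head hms_ne)
          (hghead2 _ (List.head?_eq_head hms_ne))
      set m := (pathEdges ms).length with hmdef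
      have hems : e ∈ pathEdges ms := by
        apply mem_pathEdges_mono hpre2
        rw [hpers, List.mem_reverse]
        exact hews
      have hpend2 := nodup_pathEdges hnd2
      have hcards := card_inter_alt (pathEdges ms) A B hd hpend2 halt2
      have hcov0 := covered_path hA hB hlen2 halt2 hheadstuck hts2
      refine ⟨(pathEdges ms).toFinset, List.mem_toFinset.mpr hems, ?_, ?_, Or.inl ?_⟩
      · intro f hf
        exact edges_mem_union halt2 f (List.mem_toFinset.mp hf)
      · exact covered_assemble hlen2 (A ∪ B) hcov0
      · omega
  · -- cycle case
    set E := insert g (pathEdges ws).toFinset with hE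
    have hg0 : ws[0]'(by omega) ∈ g := hghead _ (head?_getElem hws_ne)
    have hglast' : ws[ws.length - 1]'(by omega) ∈ g := hglast _ (getLast?_getElem hws_ne)
    have hgnotF : g ∉ (pathEdges ws).toFinset := fun h => hgnot (List.mem_toFinset.mp h)
    have hcards := card_inter_alt (pathEdges ws) B A hd.symm hpend1 halt1
    have hcov0 := covered_cycle hB hA hlen1 halt1 hkodd hgA hg0 hglast'
    refine ⟨E, Finset.mem_insert_of_mem (List.mem_toFinset.mpr hews), ?_, ?_, Or.inl ?_⟩
    · intro f hf
      rcases Finset.mem_insert.mp hf with rfl | hf'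
      · exact Finset.mem_union_left _ hgA
      · rw [Finset.union_comm]
        exact edges_mem_union halt1 f (List.mem_toFinset.mp hf')
    · intro f hf v hv g' hg' hvg'
      have hget : ∃ j, ∃ hj : j < ws.length, v = ws[j] := by
        rcases Finset.mem_insert.mp hf with rfl | hf'
        · rcases hgsub v hv with hv' | hv'
          · refine ⟨0, by omega, ?_⟩
            rw [head?_getElem hws_ne] at hv'
            exact (Option.some.inj hv').symm
          · refine ⟨ws.length - 1, by omega, ?_⟩
            rw [getLast?_getElem hws_ne] at hv'
            exact (Option.some.inj hv').symm
        · rw [List.mem_toFinset] at hf'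
          obtain ⟨i, hi, rfl⟩ := List.mem_iff_getElem.mp hf'
          have hi2 := lt_of_lt_pathEdges hi
          rcases mem_edge_cases hi (by omega) hi2 hv with hveq | hveq
          · exact ⟨i, by omega, hveq⟩
          · exact ⟨i+1, by omega, hveq⟩
      obtain ⟨j, hj, rfl⟩ := hget
      rcases hcov0 j hj g' (by rwa [Finset.union_comm]) hvg' with hc | hc
      · exact Finset.mem_insert_of_mem (List.mem_toFinset.mpr hc)
      · rw [hc]; exact Finset.mem_insert_self _ _
    · -- counting: equal numbers of A and B edges
      have hBE : B ∩ E = B ∩ (pathEdges ws).toFinset := by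
        rw [hE, Finset.inter_insert_of_notMem (fun h => hd.forall_ne_finset hgA h rfl)]
      have hAE : A ∩ E = insert g (A ∩ (pathEdges ws).toFinset) := by
        rw [hE, Finset.inter_insert_of_mem hgA]
      rw [hBE, hAE, Finset.card_insert_of_notMem (fun h => hgnotF (Finset.mem_inter.mp h).2)]
      omega


lemma AugPath.two_le {M1 M2 : Finset (Finset V)} (P : AugPath M1 M2) : 2 ≤ P.verts.length := by
  obtain ⟨c, hc⟩ := P.len_odd
  have := pathEdges_length P.verts
  omega

lemma AugPath.vert_edge {M1 M2 : Finset (Finset V)} (P : AugPath M1 M2) {v : V}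
    (hv : v ∈ P.verts) :
    ∃ e0 ∈ pathEdges P.verts, v ∈ e0 ∧ e0 ∈ M1 ∪ M2 := by
  obtain ⟨j, hj, rfl⟩ := List.mem_iff_getElem.mp hv
  obtain ⟨i, hi, _, hmem⟩ := vert_mem_edge hj P.two_le
  refine ⟨(pathEdges P.verts)[i]'hi, List.getElem_mem hi, hmem, ?_⟩
  have := P.alt i hi
  rw [List.get_eq_getElem] at this
  split at this
  · exact Finset.mem_union_right _ this.1
  · exact Finset.mem_union_left _ this.1

lemma AugPath.endpoint_edge {M1 M2 : Finset (Finset V)} (P : AugPath M1 M2) {v : V}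
    (hv : P.verts.head? = some v ∨ P.verts.getLast? = some v) :
    ∃ i, ∃ hi : i < (pathEdges P.verts).length, i % 2 = 0 ∧ v ∈ (pathEdges P.verts)[i]'hi := by
  have h2 := P.two_le
  have hne : P.verts ≠ [] := by intro h; rw [h] at h2; simp at h2
  have hlen := pathEdges_length P.verts
  obtain ⟨c, hc⟩ := P.len_odd
  rcases hv with hv | hv
  · refine ⟨0, by omega, by omega, ?_⟩
    rw [head?_getElem hne] at hv
    have hv' := (Option.some.inj hv).symm
    subst hv'
    rw [pathEdges_getElem P.verts 0 (by omega) (by omega) (by omega)]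
    simp
  · refine ⟨(pathEdges P.verts).length - 1, by omega, by omega, ?_⟩
    rw [getLast?_getElem hne] at hv
    have hv' := (Option.some.inj hv).symm
    subst hv'
    rw [pathEdges_getElem P.verts ((pathEdges P.verts).length - 1) (by omega) (by omega)
      (by omega)]
    have : (pathEdges P.verts).length - 1 + 1 = P.verts.length - 1 := by omega
    simp only [this]
    simp

/-- Endpoint edges of an augmenting path lie in `M2`-side. -/
lemma AugPath.endpoint_edge' {M1 M2 : Finset (Finset V)} (P : AugPath M1 M2) {v : V}
    (hv : P.verts.head? = some v ∨ P.verts.getLast? = some v) :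
    ∃ e0, v ∈ e0 ∧ e0 ∈ M2 ∧ e0 ∉ M1 := by
  obtain ⟨i, hi, hpar, hmem⟩ := P.endpoint_edge hv
  have := P.alt i hi
  rw [List.get_eq_getElem, if_pos hpar] at this
  exact ⟨_, hmem, this.1, this.2⟩

/-- Transfer an augmenting path of `(A \ E, B \ E)` to one of `(A, B)`, provided the
removed component `E` is vertex-disjoint from the rest. -/
lemma cast_augpath {A B E : Finset (Finset V)}
    (hcov : ∀ f ∈ E, ∀ v ∈ f, ∀ g, g ∈ A ∪ B → v ∈ g → g ∈ E)
    (P : AugPath (A \ E) (B \ E)) : ∃ Q : AugPath A B, Q.verts = P.verts := by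
  refine ⟨⟨P.verts, P.nodup, P.len_odd, ?_, ?_⟩, rfl⟩
  · intro i h
    have halt := P.alt i h
    by_cases hp : i % 2 = 0
    · rw [if_pos hp] at halt ⊢
      obtain ⟨h1, h2⟩ := halt
      rw [Finset.mem_sdiff] at h1
      refine ⟨h1.1, fun hmem => ?_⟩
      exact h2 (Finset.mem_sdiff.mpr ⟨hmem, fun hE => h1.2 hE⟩)
    · rw [if_neg hp] at halt ⊢
      obtain ⟨h1, h2⟩ := halt
      rw [Finset.mem_sdiff] at h1
      refine ⟨h1.1, fun hmem => ?_⟩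
      exact h2 (Finset.mem_sdiff.mpr ⟨hmem, fun hE => h1.2 hE⟩)
  · intro v hv f hf hvf
    by_cases hfE : f ∈ E
    · obtain ⟨e0, hve0, he0, he0'⟩ := P.endpoint_edge' hv
      rw [Finset.mem_sdiff] at he0
      have : e0 ∈ E := hcov f hfE v hvf e0 (Finset.mem_union_right _ he0.1) hve0
      exact he0.2 this
    · exact P.ends_unmatched v hv f (Finset.mem_sdiff.mpr ⟨hf, hfE⟩) hvf

lemma cast_augpath_top {M1 M2 : Finset (Finset V)} (hM2 : IsMatching M2)
    (P : AugPath (M1 \ M2) (M2 \ M1)) : ∃ Q : AugPath M1 M2, Q.verts = P.verts := by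
  refine ⟨⟨P.verts, P.nodup, P.len_odd, ?_, ?_⟩, rfl⟩
  · intro i h
    have halt := P.alt i h
    by_cases hp : i % 2 = 0
    · rw [if_pos hp] at halt ⊢
      obtain ⟨h1, _⟩ := halt
      rw [Finset.mem_sdiff] at h1
      exact h1
    · rw [if_neg hp] at halt ⊢
      obtain ⟨h1, _⟩ := halt
      rw [Finset.mem_sdiff] at h1
      exact h1
  · intro v hv f hf hvf
    by_cases hfM2 : f ∈ M2
    · obtain ⟨e0, hve0, he0, _⟩ := P.endpoint_edge' hv
      rw [Finset.mem_sdiff] at he0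
      have hne : f ≠ e0 := fun h => he0.2 (h ▸ hf)
      have := hM2.2 f hfM2 e0 he0.1 hne
      have hmem : v ∈ f ∩ e0 := Finset.mem_inter.mpr ⟨hvf, hve0⟩
      rw [‹f ∩ e0 = ∅›] at hmem
      simp at hmem
    · exact P.ends_unmatched v hv f (Finset.mem_sdiff.mpr ⟨hf, hfM2⟩) hvf

lemma matching_sdiff {M E : Finset (Finset V)} (hM : IsMatching M) : IsMatching (M \ E) :=
  ⟨fun e he => hM.1 e (Finset.mem_sdiff.mp he).1,
   fun e he f hf hne => hM.2 e (Finset.mem_sdiff.mp he).1 f (Finset.mem_sdiff.mp hf).1 hne⟩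

lemma main_aux (L : ℕ) (hLodd : Odd L) (hL1 : 1 ≤ L) :
    ∀ b : ℕ, ∀ A B : Finset (Finset V), IsMatching A → IsMatching B → Disjoint A B →
    B.card = b →
    ∃ n : ℕ, ∃ P : Fin n → AugPath A B,
      (∀ i j, i ≠ j → ∀ v : V, v ∈ (P i).verts → v ∉ (P j).verts) ∧
      (∀ i, (pathEdges (P i).verts).length ≤ L) ∧
      ((B.card : ℝ) - A.card - 2 * A.card / ((L : ℝ) + 1) ≤ n) := by
  have hLpos : (0 : ℝ) < (L : ℝ) + 1 := by positivity
  intro b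
  induction b using Nat.strong_induction_on with
  | _ b ih =>
    intro A B hA hB hd hcard
    rcases Finset.eq_empty_or_nonempty B with rfl | ⟨e, he⟩
    · refine ⟨0, Fin.elim0, fun i => i.elim0, fun i => i.elim0, ?_⟩
      simp only [Finset.card_empty, Nat.cast_zero, CharP.cast_eq_zero]
      have h1 : (0 : ℝ) ≤ (A.card : ℝ) := by positivity
      have h2 : (0 : ℝ) ≤ 2 * (A.card : ℝ) / ((L : ℝ) + 1) := by positivity
      linarith
    · obtain ⟨E, heE, hEsub, hcov, hcase⟩ := get_component A B hA hB hd he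
      set A' := A \ E with hA'
      set B' := B \ E with hB'
      set p := (A ∩ E).card with hp
      set q := (B ∩ E).card with hq
      have hcA : A'.card + p = A.card := Finset.card_sdiff_add_card_inter A E
      have hcB : B'.card + q = B.card := Finset.card_sdiff_add_card_inter B E
      have hq1 : 1 ≤ q := Finset.card_pos.mpr ⟨e, Finset.mem_inter.mpr ⟨he, heE⟩⟩
      have hBlt : B'.card < b := by omega
      obtain ⟨n', Q, hdisj, hshort, hbound⟩ := ih B'.card hBlt A' B'
        (matching_sdiff hA) (matching_sdiff hB)
        (Finset.disjoint_of_subset_left (Finset.sdiff_subset) 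
          (Finset.disjoint_of_subset_right (Finset.sdiff_subset) hd)) rfl
      -- cast the inductively obtained paths
      have hQcast : ∀ i : Fin n', ∃ R : AugPath A B, R.verts = (Q i).verts :=
        fun i => cast_augpath hcov (Q i)
      choose Q' hQ' using hQcast
      have hQ'disj : ∀ i j, i ≠ j → ∀ v : V, v ∈ (Q' i).verts → v ∉ (Q' j).verts := by
        intro i j hij v hvi hvj
        rw [hQ' i] at hvi
        rw [hQ' j] at hvj
        exact hdisj i j hij v hvi hvj
      have hQ'short : ∀ i, (pathEdges (Q' i).verts).length ≤ L := by
        intro i; rw [hQ' i]; exact hshort i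
      -- vertices of the old paths avoid the component
      have hQ'avoid : ∀ i : Fin n', ∀ v ∈ (Q' i).verts, ∀ f ∈ E, v ∉ f := by
        intro i v hv f hf hvf
        have hv' : v ∈ (Q i).verts := by rw [← hQ' i]; exact hv
        obtain ⟨e0, he0, hve0, he0m⟩ := (Q i).vert_edge hv'
        have he0AB : e0 ∈ A ∪ B := by
          rcases Finset.mem_union.mp he0m with h | h
          · exact Finset.mem_union_left _ (Finset.mem_sdiff.mp h).1
          · exact Finset.mem_union_right _ (Finset.mem_sdiff.mp h).1
        have he0E : e0 ∈ E := hcov f hf v hvf e0 he0AB hve0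
        rcases Finset.mem_union.mp he0m with h | h
        · exact (Finset.mem_sdiff.mp h).2 he0E
        · exact (Finset.mem_sdiff.mp h).2 he0E
      rcases hcase with hle | ⟨ms, hndms, hEeq, haltms, hlenms, hqp, hends⟩
      · -- no new augmenting path
        refine ⟨n', Q', hQ'disj, hQ'short, ?_⟩
        have hple : (q : ℝ) ≤ (p : ℝ) := by exact_mod_cast hle
        have hc1 : (A'.card : ℝ) = (A.card : ℝ) - p := by
          have := hcA; push_cast [← this]; ring
        have hc2 : (B'.card : ℝ) = (B.card : ℝ) - q := by
          have := hcB; push_cast [← this]; ring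
        have hdiv : (0 : ℝ) ≤ 2 * (p : ℝ) / ((L : ℝ) + 1) := by positivity
        rw [hc1, hc2] at hbound
        have expand : 2 * ((A.card : ℝ) - p) / ((L : ℝ) + 1)
            = 2 * (A.card : ℝ) / ((L : ℝ) + 1) - 2 * (p : ℝ) / ((L : ℝ) + 1) := by
          field_simp
        rw [expand] at hbound
        linarith
      · -- an augmenting path of length 2p+1
        by_cases hshortnew : (pathEdges ms).length ≤ L
        · -- collect it
          have hmsne : ms ≠ [] := by
            intro h; rw [h] at hlenms; simp [pathEdges] at hlenms
          obtain ⟨P0, hP0⟩ : ∃ P0 : AugPath A B, P0.verts = ms := by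
            refine ⟨⟨ms, hndms, ⟨p, by omega⟩, ?_, ?_⟩, rfl⟩
            · intro i h
              have halt := haltms i h
              rw [List.get_eq_getElem]
              by_cases hpar : i % 2 = 0
              · rw [if_pos hpar] at halt ⊢
                exact ⟨halt, fun hmem => hd.forall_ne_finset hmem halt rfl⟩
              · rw [if_neg hpar] at halt ⊢
                exact ⟨halt, fun hmem => hd.forall_ne_finset halt hmem rfl⟩
            · intro v hv f hf hvf
              exact hends f hf v hv hvf
          have hms2 : 2 ≤ ms.length := by
            have := pathEdges_length ms; omega
          have hnew_old : ∀ (i : Fin n') (v : V), v ∈ P0.verts → v ∉ (Q' i).verts := by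
            intro i v hv hv'
            rw [hP0] at hv
            obtain ⟨j, hj, rfl⟩ := List.mem_iff_getElem.mp hv
            obtain ⟨i0, hi0, _, hmem⟩ := vert_mem_edge hj hms2
            have hfE : (pathEdges ms)[i0]'hi0 ∈ E := by
              rw [hEeq]
              exact List.mem_toFinset.mpr (List.getElem_mem hi0)
            exact hQ'avoid i _ hv' _ hfE hmem
          refine ⟨n' + 1, Fin.cons P0 Q', ?_, ?_, ?_⟩
          · intro i j hij v hvi hvj
            induction i using Fin.cases with
            | zero =>
              induction j using Fin.cases with
              | zero => exact hij rfl
              | succ j' =>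
                rw [Fin.cons_zero] at hvi
                rw [Fin.cons_succ] at hvj
                exact hnew_old j' v hvi hvj
            | succ i' =>
              induction j using Fin.cases with
              | zero =>
                rw [Fin.cons_succ] at hvi
                rw [Fin.cons_zero] at hvj
                exact hnew_old i' v hvj hvi
              | succ j' =>
                rw [Fin.cons_succ] at hvi hvj
                exact hQ'disj i' j' (fun h => hij (by rw [h])) v hvi hvj
          · intro i
            induction i using Fin.cases with
            | zero => rw [Fin.cons_zero, hP0]; exact hshortnew
            | succ i' => rw [Fin.cons_succ]; exact hQ'short i'
          · have hc1 : (A'.card : ℝ) = (A.card : ℝ) - p := by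
              have := hcA; push_cast [← this]; ring
            have hc2 : (B'.card : ℝ) = (B.card : ℝ) - q := by
              have := hcB; push_cast [← this]; ring
            have hdiv : (0 : ℝ) ≤ 2 * (p : ℝ) / ((L : ℝ) + 1) := by positivity
            rw [hc1, hc2] at hbound
            have expand : 2 * ((A.card : ℝ) - p) / ((L : ℝ) + 1)
                = 2 * (A.card : ℝ) / ((L : ℝ) + 1) - 2 * (p : ℝ) / ((L : ℝ) + 1) := by
              field_simp
            rw [expand] at hbound
            have hqp' : (q : ℝ) = (p : ℝ) + 1 := by exact_mod_cast hqp
            push_cast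
            linarith
        · -- discard the long augmenting path
          refine ⟨n', Q', hQ'disj, hQ'short, ?_⟩
          have h2p : L + 1 ≤ 2 * p := by
            obtain ⟨c, hc⟩ := hLodd
            omega
          have hc1 : (A'.card : ℝ) = (A.card : ℝ) - p := by
            have := hcA; push_cast [← this]; ring
          have hc2 : (B'.card : ℝ) = (B.card : ℝ) - q := by
            have := hcB; push_cast [← this]; ring
          have hdiv : (1 : ℝ) ≤ 2 * (p : ℝ) / ((L : ℝ) + 1) := by
            rw [le_div_iff₀ hLpos]
            have : ((L : ℝ) + 1) ≤ 2 * (p : ℝ) := by exact_mod_cast h2p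
            linarith
          rw [hc1, hc2] at hbound
          have expand : 2 * ((A.card : ℝ) - p) / ((L : ℝ) + 1)
              = 2 * (A.card : ℝ) / ((L : ℝ) + 1) - 2 * (p : ℝ) / ((L : ℝ) + 1) := by
            field_simp
          rw [expand] at hbound
          have hqp' : (q : ℝ) = (p : ℝ) + 1 := by exact_mod_cast hqp
          linarith
/-- If `|M2| > |M1|`, then for any odd `L ≥ 1` the symmetric difference contains at least
`|M2| − (1 + 2/(L+1))·|M1|` vertex-disjoint augmenting paths of length at most `L`. -/
theorem stmt0 (M1 M2 : Finset (Finset V))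
    (hM1 : IsMatching M1) (hM2 : IsMatching M2)
    (hlt : M1.card < M2.card) (L : ℕ) (hLodd : Odd L) (hL1 : 1 ≤ L) :
    ∃ (n : ℕ) (P : Fin n → AugPath M1 M2),
      Function.Injective P ∧
      (∀ i j, i ≠ j → ∀ v : V, v ∈ (P i).verts → v ∉ (P j).verts) ∧
      (∀ i, (P i).length ≤ L) ∧
      (M2.card : ℝ) - (1 + 2 / ((L : ℝ) + 1)) * M1.card ≤ (n : ℝ) := by
  obtain ⟨n, P, hdisj, hshort, hbound⟩ := main_aux L hLodd hL1 (M2 \ M1).card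
    (M1 \ M2) (M2 \ M1) (matching_sdiff hM1) (matching_sdiff hM2)
    disjoint_sdiff_sdiff rfl
  choose P' hP' using fun i => cast_augpath_top hM2 (P i)
  have hdisj' : ∀ i j, i ≠ j → ∀ v : V, v ∈ (P' i).verts → v ∉ (P' j).verts := by
    intro i j hij v hvi hvj
    rw [hP' i] at hvi
    rw [hP' j] at hvj
    exact hdisj i j hij v hvi hvj
  refine ⟨n, P', ?_, hdisj', ?_, ?_⟩
  · intro i j hij
    by_contra hne
    have h2 := (P' i).two_le
    have hne0 : (P' i).verts ≠ [] := by intro h; rw [h] at h2; simp at h2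
    have hv := List.head_mem hne0
    exact hdisj' i j hne _ hv (by rw [← hij]; exact hv)
  · intro i
    show (pathEdges (P' i).verts).length ≤ L
    rw [hP' i]
    exact hshort i
  · have hc1 : (M1 \ M2).card + (M1 ∩ M2).card = M1.card :=
      Finset.card_sdiff_add_card_inter M1 M2
    have hc2 : (M2 \ M1).card + (M2 ∩ M1).card = M2.card :=
      Finset.card_sdiff_add_card_inter M2 M1
    have hcc : (M2 ∩ M1).card = (M1 ∩ M2).card := by rw [Finset.inter_comm]
    set c := (M1 ∩ M2).card with hcdef
    have hLpos : (0 : ℝ) < (L : ℝ) + 1 := by positivity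
    have e1 : ((M1 \ M2).card : ℝ) = (M1.card : ℝ) - c := by push_cast [← hc1]; ring
    have e2 : ((M2 \ M1).card : ℝ) = (M2.card : ℝ) - c := by
      rw [← hc2, hcc]; push_cast; ring
    rw [e1, e2] at hbound
    have expand : 2 * ((M1.card : ℝ) - c) / ((L : ℝ) + 1)
        = 2 * (M1.card : ℝ) / ((L : ℝ) + 1) - 2 * (c : ℝ) / ((L : ℝ) + 1) := by
      field_simp
    rw [expand] at hbound
    have h0 : (0 : ℝ) ≤ 2 * (c : ℝ) / ((L : ℝ) + 1) := by positivity
    have emul : (1 + 2 / ((L : ℝ) + 1)) * (M1.card : ℝ)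
        = (M1.card : ℝ) + 2 * (M1.card : ℝ) / ((L : ℝ) + 1) := by ring
    rw [emul]
    linarith
end

section
/- Let 0 < ε < 1 and 0 < p ≤ 1. Set L = 4/ε − 1 (assumed to be an odd positive integer), γ = p^{(L+1)/2}·(1 + 2/(L+1)), α = p^{(L+1)/2}, and R = log(2/ε)/p^{2/ε} (assumed a positive integer). Then (α/γ)·(1 − (1−γ)^R) ≥ 1 − ε. -/
set_option maxHeartbeats 1000000 in
/-- The key numeric inequality in the analysis of the adaptive stochastic matching
algorithm: with `L = 4/ε − 1` (odd positive integer), `α = p^{(L+1)/2}`,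
`γ = p^{(L+1)/2}·(1 + 2/(L+1))` and `R = log(2/ε)/p^{2/ε}` (a positive integer),
we have `(α/γ)·(1 − (1−γ)^R) ≥ 1 − ε`. -/
theorem stmt5 (ε p : ℝ) (hε0 : 0 < ε) (hε1 : ε < 1) (hp0 : 0 < p) (hp1 : p ≤ 1)
    (L R : ℕ) (hLodd : Odd L) (hLpos : 0 < L) (hL : (L : ℝ) = 4 / ε - 1)
    (hRpos : 0 < R) (hR : (R : ℝ) = Real.log (2 / ε) / Real.rpow p (2 / ε)) :
    1 - ε ≤
      (p ^ ((L + 1) / 2) / (p ^ ((L + 1) / 2) * (1 + 2 / ((L : ℝ) + 1)))) *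
        (1 - (1 - p ^ ((L + 1) / 2) * (1 + 2 / ((L : ℝ) + 1))) ^ R) := by
  obtain ⟨k, hk⟩ := hLodd
  have hhalf : (L + 1) / 2 = k + 1 := by omega
  have hLk : (L : ℝ) = 2 * k + 1 := by rw [hk]; push_cast; ring
  have h4 : (2 * (k : ℝ) + 2) * ε = 4 := by
    have h4' : (2 * (k : ℝ) + 2) = 4 / ε := by rw [hLk] at hL; linarith
    rw [h4', div_mul_cancel₀ _ hε0.ne']
  have hcast : (((L + 1) / 2 : ℕ) : ℝ) = 2 / ε := by
    rw [hhalf, eq_div_iff hε0.ne']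
    push_cast
    linarith
  have hεL : 2 / ((L : ℝ) + 1) = ε / 2 := by
    rw [hL]
    field_simp
    ring
  obtain ⟨α, hα⟩ : ∃ a : ℝ, p ^ ((L + 1) / 2) = a := ⟨_, rfl⟩
  have hαpos : 0 < α := hα ▸ pow_pos hp0 _
  have hα1 : α ≤ 1 := hα ▸ pow_le_one₀ hp0.le hp1
  have hrpow : Real.rpow p (2 / ε) = α := by
    rw [← hcast, ← hα]; exact Real.rpow_natCast p _
  obtain ⟨γ, hγ⟩ : ∃ g : ℝ, α * (1 + 2 / ((L : ℝ) + 1)) = g := ⟨_, rfl⟩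
  rw [hα, hγ]
  have hγε : γ = α * (1 + ε / 2) := by rw [← hγ, hεL]
  have hγpos : 0 < γ := by rw [hγε]; positivity
  have hαγ : α ≤ γ := by rw [hγε]; nlinarith
  have hγle : γ ≤ 1 + ε / 2 := by rw [hγε]; nlinarith
  have hRα : (R : ℝ) * α = Real.log (2 / ε) := by
    rw [hR, hrpow]
    field_simp
  have hlog2ε : 0 < (2 : ℝ) / ε := by positivity
  -- first factor
  have h1 : 1 - ε / 2 ≤ α / γ := by
    have hdiv : α / γ = 1 / (1 + ε / 2) := by
      rw [hγε]
      field_simp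
    rw [hdiv, le_div_iff₀ (by linarith)]
    nlinarith
  -- second: (1 - γ)^R ≤ ε/2
  have h2 : (1 - γ) ^ R ≤ ε / 2 := by
    rcases le_or_gt γ 1 with hle | hgt
    · have hnn : 0 ≤ 1 - γ := by linarith
      have hb : 1 - γ ≤ Real.exp (-γ) := by
        have := Real.add_one_le_exp (-γ); linarith
      calc (1 - γ) ^ R ≤ Real.exp (-γ) ^ R := pow_le_pow_left₀ hnn hb R
        _ = Real.exp (-(γ * R)) := by
            rw [← Real.exp_nat_mul]; ring_nf
        _ ≤ Real.exp (-(α * R)) := by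
            apply Real.exp_le_exp.mpr
            have : (0:ℝ) ≤ R := Nat.cast_nonneg R
            nlinarith
        _ = ε / 2 := by
            rw [mul_comm, hRα, Real.exp_neg, Real.exp_log hlog2ε]
            field_simp
    · have h1γ : 1 - γ ≤ 0 := by linarith
      calc (1 - γ) ^ R ≤ |(1 - γ) ^ R| := le_abs_self _
        _ = |1 - γ| ^ R := by rw [abs_pow]
        _ ≤ (ε / 2) ^ R := by
            apply pow_le_pow_left₀ (abs_nonneg _)
            rw [abs_of_nonpos h1γ]
            linarith
        _ ≤ ε / 2 :=
            pow_le_of_le_one (by linarith) (by linarith) hRpos.ne'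
  have h3 : 1 - ε / 2 ≤ 1 - (1 - γ) ^ R := by linarith
  have hεnn : (0:ℝ) ≤ 1 - ε / 2 := by linarith
  have := mul_le_mul h1 h3 hεnn (le_trans hεnn h1)
  nlinarith
end

section
/- Let G = (U ∪ V, U × V) be the complete bipartite graph with |U| = |V| = n, and let each edge be included independently with probability p ∈ (0,1) constant. Then the expected maximum matching size of the random subgraph is at least n − o(n); more precisely, with probability at least 1 − 1/n^8, the random subgraph has a matching of size at least n − c·log n where c = 10/log(1/(1−p)). -/
open Finset
open scoped Classical

/-- `matchNum F` is the maximum matching size of the graph with edge set `F`. -/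
def matchNum {V : Type*} [DecidableEq V] (F : Finset (Finset V)) : ℕ :=
  (F.powerset.filter (fun M => ∀ e ∈ M, ∀ f ∈ M, e ≠ f → e ∩ f = ∅)).sup Finset.card

/-- The edge set of the complete bipartite graph on two sides of size `n`. -/
def bipEdges (n : ℕ) : Finset (Finset (Fin n ⊕ Fin n)) :=
  Finset.univ.image
    (fun q : Fin n × Fin n => ({Sum.inl q.1, Sum.inr q.2} : Finset (Fin n ⊕ Fin n)))

/-- Expected maximum matching size of the random subgraph of `G` with edge probability `p`. -/
noncomputable def expMatch {V : Type*} [DecidableEq V] (G : Finset (Finset V)) (p : ℝ) : ℝ :=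
  ∑ S ∈ G.powerset, p ^ S.card * (1 - p) ^ (G.card - S.card) * (matchNum S : ℝ)

lemma sum_w_eq {X : Type*} [DecidableEq X] (p q : ℝ) (G : Finset X) :
    ∑ S ∈ G.powerset, p ^ S.card * q ^ (G.card - S.card) = (p + q) ^ G.card := by
  rw [← Finset.prod_const, Finset.prod_add]
  refine Finset.sum_congr rfl fun t ht => ?_
  rw [Finset.mem_powerset] at ht
  rw [Finset.prod_const, Finset.prod_const, Finset.card_sdiff_of_subset ht]

lemma sum_w_one {X : Type*} [DecidableEq X] (p : ℝ) (G : Finset X) :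
    ∑ S ∈ G.powerset, p ^ S.card * (1 - p) ^ (G.card - S.card) = 1 := by
  have := sum_w_eq p (1 - p) G
  simpa using this

lemma prob_absent {X : Type*} [DecidableEq X] (p : ℝ) {G A : Finset X} (hA : A ⊆ G) :
    ∑ S ∈ G.powerset, (if Disjoint S A then p ^ S.card * (1 - p) ^ (G.card - S.card) else 0)
      = (1 - p) ^ A.card := by
  rw [Finset.sum_ite, Finset.sum_const_zero, add_zero]
  have hfilt : G.powerset.filter (fun S => Disjoint S A) = (G \ A).powerset := by
    ext S
    simp [Finset.mem_powerset, Finset.subset_sdiff, and_comm]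
  rw [hfilt]
  have hcard : (G \ A).card = G.card - A.card := Finset.card_sdiff_of_subset hA
  have key : ∀ S ∈ (G \ A).powerset,
      p ^ S.card * (1 - p) ^ (G.card - S.card)
        = (1 - p) ^ A.card * (p ^ S.card * (1 - p) ^ ((G \ A).card - S.card)) := by
    intro S hS
    rw [Finset.mem_powerset] at hS
    have h1 : S.card ≤ (G \ A).card := Finset.card_le_card hS
    have h2 : A.card ≤ G.card := Finset.card_le_card hA
    have : G.card - S.card = ((G \ A).card - S.card) + A.card := by omega
    rw [this, pow_add]; ring
  rw [Finset.sum_congr rfl key, ← Finset.mul_sum, sum_w_one, mul_one]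

/-- the edge between `a` on the left and `b` on the right -/
def bedge {n : ℕ} (a b : Fin n) : Finset (Fin n ⊕ Fin n) := {Sum.inl a, Sum.inr b}

lemma bedge_inj {n : ℕ} {a a' b b' : Fin n} (h : bedge a b = bedge a' b') :
    a = a' ∧ b = b' := by
  have h1 : (Sum.inl a : Fin n ⊕ Fin n) ∈ bedge a' b' := by
    rw [← h]; simp [bedge]
  have h2 : (Sum.inr b : Fin n ⊕ Fin n) ∈ bedge a' b' := by
    rw [← h]; simp [bedge]
  simp only [bedge, Finset.mem_insert, Finset.mem_singleton] at h1 h2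
  constructor
  · rcases h1 with h1 | h1 <;> simp_all
  · rcases h2 with h2 | h2 <;> simp_all

lemma bedge_mem {n : ℕ} (a b : Fin n) : bedge a b ∈ bipEdges n := by
  simp only [bipEdges, Finset.mem_image]
  exact ⟨(a, b), Finset.mem_univ _, rfl⟩

lemma bedge_inter {n : ℕ} {a a' b b' : Fin n} (ha : a ≠ a') (hb : b ≠ b') :
    bedge a b ∩ bedge a' b' = ∅ := by
  ext x
  simp only [bedge, Finset.mem_inter, Finset.mem_insert, Finset.mem_singleton,
    Finset.notMem_empty, iff_false, not_and]
  rintro (rfl | rfl) (h | h) <;> simp_all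

/-- neighborhood of `a` in the edge set `S` -/
def nbr {n : ℕ} (S : Finset (Finset (Fin n ⊕ Fin n))) (a : Fin n) : Finset (Fin n) :=
  Finset.univ.filter (fun b => bedge a b ∈ S)

lemma le_matchNum {V : Type*} [DecidableEq V] (S M : Finset (Finset V)) (h1 : M ⊆ S)
    (h2 : ∀ e ∈ M, ∀ f ∈ M, e ≠ f → e ∩ f = ∅) : M.card ≤ matchNum S := by
  apply Finset.le_sup
  simp only [Finset.mem_filter, Finset.mem_powerset]
  exact ⟨h1, h2⟩

lemma hall_defect {n : ℕ} (S : Finset (Finset (Fin n ⊕ Fin n))) (d : ℕ)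
    (hH : ∀ A : Finset (Fin n), A.card ≤ (A.biUnion (nbr S)).card + d) :
    n - d ≤ matchNum S := by
  classical
  set r' : Fin n → Finset (Fin n ⊕ Fin d) :=
    fun a => (nbr S a).image Sum.inl ∪ (Finset.univ : Finset (Fin d)).image Sum.inr with hr'
  have hall : ∀ A : Finset (Fin n), A.card ≤ (A.biUnion r').card := by
    intro A
    rcases A.eq_empty_or_nonempty with rfl | ⟨a0, ha0⟩
    · simp
    have hsub : (A.biUnion (nbr S)).image Sum.inl ∪
        (Finset.univ : Finset (Fin d)).image Sum.inr ⊆ A.biUnion r' := by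
      intro x hx
      rcases Finset.mem_union.mp hx with hx | hx
      · rcases Finset.mem_image.mp hx with ⟨b, hb, rfl⟩
        rcases Finset.mem_biUnion.mp hb with ⟨a, ha, hab⟩
        exact Finset.mem_biUnion.mpr ⟨a, ha, Finset.mem_union_left _ (Finset.mem_image_of_mem _ hab)⟩
      · exact Finset.mem_biUnion.mpr ⟨a0, ha0, Finset.mem_union_right _ hx⟩
    have hdisj : Disjoint ((A.biUnion (nbr S)).image (Sum.inl : Fin n → Fin n ⊕ Fin d))
        ((Finset.univ : Finset (Fin d)).image Sum.inr) := by
      simp [Finset.disjoint_left]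
    calc A.card ≤ (A.biUnion (nbr S)).card + d := hH A
      _ = ((A.biUnion (nbr S)).image (Sum.inl : Fin n → Fin n ⊕ Fin d)).card
          + ((Finset.univ : Finset (Fin d)).image (Sum.inr : Fin d → Fin n ⊕ Fin d)).card := by
          rw [Finset.card_image_of_injective _ Sum.inl_injective,
            Finset.card_image_of_injective _ Sum.inr_injective, Finset.card_univ, Fintype.card_fin]
      _ = ((A.biUnion (nbr S)).image Sum.inl ∪
          (Finset.univ : Finset (Fin d)).image Sum.inr).card := (Finset.card_union_of_disjoint hdisj).symm
      _ ≤ (A.biUnion r').card := Finset.card_le_card hsub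
  obtain ⟨f, hfinj, hfmem⟩ := (Finset.all_card_le_biUnion_card_iff_existsInjective' r').mp hall
  set U' : Finset (Fin n) := Finset.univ.filter (fun a => (f a).isLeft) with hU'
  -- g a: the left component of f a (or a itself as junk)
  set g : Fin n → Fin n := fun a => Sum.elim id (fun _ => a) (f a) with hg
  have hgmem : ∀ a ∈ U', g a ∈ nbr S a := by
    intro a ha
    rw [hU', Finset.mem_filter] at ha
    obtain ⟨b, hb⟩ := Sum.isLeft_iff.mp ha.2
    have := hfmem a
    rw [hb] at this
    have hga : g a = b := by simp [hg, hb]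
    rw [hga]
    rcases Finset.mem_union.mp this with h | h
    · rcases Finset.mem_image.mp h with ⟨c, hc, hcc⟩
      rwa [← Sum.inl_injective hcc]
    · rcases Finset.mem_image.mp h with ⟨c, _, hcc⟩
      exact absurd hcc (by simp)
  have hginj : Set.InjOn g U' := by
    intro a ha a' ha' hgg
    rw [hU', Finset.coe_filter] at ha ha'
    obtain ⟨b, hb⟩ := Sum.isLeft_iff.mp ha.2
    obtain ⟨b', hb'⟩ := Sum.isLeft_iff.mp ha'.2
    apply hfinj
    rw [hb, hb']
    simp only [hg, hb, hb', Sum.elim_inl, id] at hgg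
    rw [hgg]
  have hU'card : n - d ≤ U'.card := by
    rw [hU']
    have hcompl : (Finset.univ.filter (fun a => ¬ (f a).isLeft)).card ≤ d := by
      have himg : (Finset.univ.filter (fun a => ¬ (f a).isLeft)).image f ⊆
          (Finset.univ : Finset (Fin d)).image Sum.inr := by
        intro x hx
        rcases Finset.mem_image.mp hx with ⟨a, ha, rfl⟩
        rw [Finset.mem_filter] at ha
        obtain ⟨c, hc⟩ := Sum.isRight_iff.mp (Sum.not_isLeft.mp ha.2)
        rw [hc]
        exact Finset.mem_image_of_mem _ (Finset.mem_univ c)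
      calc (Finset.univ.filter (fun a => ¬ (f a).isLeft)).card
          = ((Finset.univ.filter (fun a => ¬ (f a).isLeft)).image f).card :=
            (Finset.card_image_of_injective _ hfinj).symm
        _ ≤ ((Finset.univ : Finset (Fin d)).image Sum.inr).card := Finset.card_le_card himg
        _ ≤ d := by
            rw [Finset.card_image_of_injective _ Sum.inr_injective]; simp
    have := Finset.card_filter_add_card_filter_not (s := (Finset.univ : Finset (Fin n)))
      (p := fun a => (f a).isLeft)
    simp only [Finset.card_univ, Fintype.card_fin] at this
    omega
  -- build the matching
  set M : Finset (Finset (Fin n ⊕ Fin n)) := U'.image (fun a => bedge a (g a)) with hM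
  have hMcard : M.card = U'.card := by
    rw [hM]
    apply Finset.card_image_of_injOn
    intro a ha a' ha' hee
    exact (bedge_inj hee).1
  have hMsub : M ⊆ S := by
    · intro e he
      rcases Finset.mem_image.mp he with ⟨a, ha, rfl⟩
      have := hgmem a ha
      simpa [nbr] using this
  have hMdisj : ∀ e ∈ M, ∀ f ∈ M, e ≠ f → e ∩ f = ∅ := by
    · intro e he e' he' hne
      rcases Finset.mem_image.mp he with ⟨a, ha, rfl⟩
      rcases Finset.mem_image.mp he' with ⟨a', ha', rfl⟩
      have hane : a ≠ a' := by rintro rfl; exact hne rfl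
      have hgne : g a ≠ g a' := fun h => hane (hginj (by simpa using ha) (by simpa using ha') h)
      exact bedge_inter hane hgne
  calc n - d ≤ U'.card := hU'card
    _ = M.card := hMcard.symm
    _ ≤ matchNum S := le_matchNum S M hMsub hMdisj

lemma bad_witness {n d : ℕ} (S : Finset (Finset (Fin n ⊕ Fin n)))
    (h : ¬ (n - d ≤ matchNum S)) :
    ∃ A : Finset (Fin n), (A.biUnion (nbr S)).card + d < A.card := by
  by_contra hc
  push_neg at hc
  exact h (hall_defect S d hc)

/-- the potential edges between `A` and the complement of `B` -/
def absEdges {n : ℕ} (A B : Finset (Fin n)) : Finset (Finset (Fin n ⊕ Fin n)) :=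
  (A ×ˢ ((Finset.univ : Finset (Fin n)) \ B)).image (fun q => bedge q.1 q.2)

lemma absEdges_sub {n : ℕ} (A B : Finset (Fin n)) : absEdges A B ⊆ bipEdges n := by
  intro e he
  rcases Finset.mem_image.mp he with ⟨q, _, rfl⟩
  exact bedge_mem q.1 q.2

lemma absEdges_card {n : ℕ} (A B : Finset (Fin n)) :
    (absEdges A B).card = A.card * (n - B.card) := by
  rw [absEdges, Finset.card_image_of_injOn, Finset.card_product, Finset.card_sdiff_of_subset
    (Finset.subset_univ _), Finset.card_univ, Fintype.card_fin]
  intro q _ q' _ h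
  obtain ⟨h1, h2⟩ := bedge_inj h
  exact Prod.ext h1 h2

lemma witness_disjoint {n : ℕ} (S : Finset (Finset (Fin n ⊕ Fin n))) (A : Finset (Fin n)) :
    Disjoint S (absEdges A (A.biUnion (nbr S))) := by
  rw [Finset.disjoint_right]
  intro e he hes
  rcases Finset.mem_image.mp he with ⟨⟨a, b⟩, hq, rfl⟩
  rw [Finset.mem_product, Finset.mem_sdiff] at hq
  apply hq.2.2
  exact Finset.mem_biUnion.mpr ⟨a, hq.1, by simp [nbr, hes]⟩

lemma badSum_le {n : ℕ} (p k : ℝ) (hp0 : 0 ≤ p) (hp1 : p ≤ 1) (hk : 0 ≤ k) :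
    (∑ S ∈ (bipEdges n).powerset,
      (if ¬((n : ℝ) - k ≤ (matchNum S : ℝ)) then
        p ^ S.card * (1 - p) ^ ((bipEdges n).card - S.card) else 0))
    ≤ ∑ AB ∈ (((Finset.univ : Finset (Fin n)).powerset ×ˢ
          (Finset.univ : Finset (Fin n)).powerset).filter
            (fun ab => ab.2.card + ⌊k⌋₊ < ab.1.card)),
        (1 - p) ^ (AB.1.card * (n - AB.2.card)) := by
  classical
  set G := bipEdges n with hG
  set w : Finset (Finset (Fin n ⊕ Fin n)) → ℝ :=
    fun S => p ^ S.card * (1 - p) ^ (G.card - S.card) with hw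
  have hwnn : ∀ S, 0 ≤ w S := fun S =>
    mul_nonneg (pow_nonneg hp0 _) (pow_nonneg (by linarith) _)
  set P := (((Finset.univ : Finset (Fin n)).powerset ×ˢ
      (Finset.univ : Finset (Fin n)).powerset).filter
        (fun ab => ab.2.card + ⌊k⌋₊ < ab.1.card)) with hP
  have step1 : (∑ S ∈ G.powerset, (if ¬((n : ℝ) - k ≤ (matchNum S : ℝ)) then w S else 0))
      ≤ ∑ S ∈ G.powerset, ∑ AB ∈ P,
          (if Disjoint S (absEdges AB.1 AB.2) then w S else 0) := by
    apply Finset.sum_le_sum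
    intro S _
    by_cases hbad : ¬((n : ℝ) - k ≤ (matchNum S : ℝ))
    · rw [if_pos hbad]
      -- get a witness
      have hnat : ¬ (n - ⌊k⌋₊ ≤ matchNum S) := by
        intro hle
        apply hbad
        have h1 : ((n - ⌊k⌋₊ : ℕ) : ℝ) ≤ (matchNum S : ℝ) := Nat.cast_le.mpr hle
        have h2 : (n : ℝ) - (⌊k⌋₊ : ℝ) ≤ ((n - ⌊k⌋₊ : ℕ) : ℝ) := by
          rcases le_or_gt (⌊k⌋₊ : ℕ) n with h | h
          · rw [Nat.cast_sub h]
          · have : n - ⌊k⌋₊ = 0 := by omega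
            rw [this]
            push_cast
            have : (n : ℝ) ≤ (⌊k⌋₊ : ℝ) := by exact_mod_cast h.le
            linarith
        have h3 : (⌊k⌋₊ : ℝ) ≤ k := Nat.floor_le hk
        linarith
      obtain ⟨A, hA⟩ := bad_witness S hnat
      have hmem : (A, A.biUnion (nbr S)) ∈ P := by
        rw [hP, Finset.mem_filter, Finset.mem_product]
        exact ⟨⟨Finset.mem_powerset.mpr (Finset.subset_univ _),
          Finset.mem_powerset.mpr (Finset.subset_univ _)⟩, by simpa using hA⟩
      calc w S = (if Disjoint S (absEdges A (A.biUnion (nbr S))) then w S else 0) := by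
            rw [if_pos (witness_disjoint S A)]
        _ ≤ ∑ AB ∈ P, (if Disjoint S (absEdges AB.1 AB.2) then w S else 0) := by
            apply Finset.single_le_sum (f := fun AB =>
              (if Disjoint S (absEdges AB.1 AB.2) then w S else 0)) _ hmem
            intro i _
            split
            · exact hwnn S
            · exact le_rfl
    · rw [if_neg hbad]
      apply Finset.sum_nonneg
      intro i _
      split
      · exact hwnn S
      · exact le_rfl
  rw [Finset.sum_comm] at step1
  refine step1.trans (le_of_eq (Finset.sum_congr rfl fun AB _ => ?_))
  have := prob_absent p (G := G) (A := absEdges AB.1 AB.2) (absEdges_sub _ _)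
  rw [← absEdges_card AB.1 AB.2]
  exact this

lemma psum_le {n : ℕ} (q : ℝ) (d : ℕ) (hq0 : 0 ≤ q) (hq1 : q ≤ 1)
    (hqk : q ^ (d + 1) ≤ (((n : ℝ) ^ (10 : ℕ))⁻¹)) (hn : 4 ≤ n) :
    ∑ AB ∈ (((Finset.univ : Finset (Fin n)).powerset ×ˢ
          (Finset.univ : Finset (Fin n)).powerset).filter
            (fun ab => ab.2.card + d < ab.1.card)),
        q ^ (AB.1.card * (n - AB.2.card)) ≤ 1 / (n : ℝ) ^ 8 := by
  classical
  set P := (((Finset.univ : Finset (Fin n)).powerset ×ˢ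
      (Finset.univ : Finset (Fin n)).powerset).filter
        (fun ab => ab.2.card + d < ab.1.card)) with hP
  have hx : (4 : ℝ) ≤ (n : ℝ) := by exact_mod_cast hn
  have hx1 : (1 : ℝ) ≤ (n : ℝ) := by linarith
  have hx0 : (0 : ℝ) < (n : ℝ) := by linarith
  -- each term is at most ((n^10)⁻¹)^n
  have hterm : ∀ AB ∈ P, q ^ (AB.1.card * (n - AB.2.card)) ≤ (((n : ℝ) ^ (10 : ℕ))⁻¹) ^ n := by
    intro AB hAB
    rw [hP, Finset.mem_filter, Finset.mem_product] at hAB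
    obtain ⟨⟨h1, h2⟩, h3⟩ := hAB
    set s := AB.1.card
    set t := AB.2.card
    have hsn : s ≤ n := by
      have := Finset.card_le_card (Finset.mem_powerset.mp h1)
      simpa using this
    have htn : t ≤ n := by
      have := Finset.card_le_card (Finset.mem_powerset.mp h2)
      simpa using this
    -- n * (d+1) ≤ s * (n - t)
    have hkey : n * (d + 1) ≤ s * (n - t) := by
      have h4 : (n - s) + (d + 1) ≤ n - t := by omega
      have h5 : d + 1 ≤ s := by omega
      calc n * (d + 1) = s * (d + 1) + (n - s) * (d + 1) := by
            rw [← Nat.add_mul]; congr 1; omega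
        _ ≤ s * (d + 1) + s * (n - s) := by
            have h6 : (n - s) * (d + 1) ≤ s * (n - s) := by
              calc (n - s) * (d + 1) ≤ (n - s) * s := Nat.mul_le_mul_left _ h5
                _ = s * (n - s) := Nat.mul_comm _ _
            omega
        _ = s * ((n - s) + (d + 1)) := by ring
        _ ≤ s * (n - t) := Nat.mul_le_mul_left s h4
    calc q ^ (s * (n - t)) ≤ q ^ (n * (d + 1)) := pow_le_pow_of_le_one hq0 hq1 hkey
      _ = (q ^ (d + 1)) ^ n := by rw [← pow_mul, Nat.mul_comm, Nat.mul_comm (d+1) n]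
      _ ≤ ((((n : ℝ) ^ (10 : ℕ))⁻¹)) ^ n := by
          apply pow_le_pow_left₀ (pow_nonneg hq0 _) hqk
  have hcard : P.card ≤ 2 ^ n * 2 ^ n := by
    calc P.card ≤ ((Finset.univ : Finset (Fin n)).powerset ×ˢ
        (Finset.univ : Finset (Fin n)).powerset).card := Finset.card_filter_le _ _
      _ = 2 ^ n * 2 ^ n := by
        rw [Finset.card_product, Finset.card_powerset, Finset.card_univ, Fintype.card_fin]
  have hsum : ∑ AB ∈ P, q ^ (AB.1.card * (n - AB.2.card))
      ≤ (P.card : ℝ) * (((n : ℝ) ^ (10 : ℕ))⁻¹) ^ n := by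
    have := Finset.sum_le_card_nsmul P _ _ hterm
    rwa [nsmul_eq_mul] at this
  have hbnd : (P.card : ℝ) * (((n : ℝ) ^ (10 : ℕ))⁻¹) ^ n
      ≤ ((n : ℝ) ^ n * (n : ℝ) ^ n) * (((n : ℝ) ^ (10 : ℕ))⁻¹) ^ n := by
    apply mul_le_mul_of_nonneg_right _ (pow_nonneg (by positivity) _)
    calc (P.card : ℝ) ≤ ((2 : ℝ) ^ n * 2 ^ n) := by exact_mod_cast hcard
      _ ≤ (n : ℝ) ^ n * (n : ℝ) ^ n := by
        have h2n : (2 : ℝ) ^ n ≤ (n : ℝ) ^ n := pow_le_pow_left₀ (by norm_num) (by linarith) n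
        exact mul_le_mul h2n h2n (by positivity) (by positivity)
  have hfinal : ((n : ℝ) ^ n * (n : ℝ) ^ n) * (((n : ℝ) ^ (10 : ℕ))⁻¹) ^ n ≤ 1 / (n : ℝ) ^ 8 := by
    have e1 : (((n : ℝ) ^ (10 : ℕ))⁻¹) ^ n = ((n : ℝ) ^ (10 * n))⁻¹ := by
      rw [inv_pow, ← pow_mul]
    rw [e1, ← pow_add, ← div_eq_mul_inv, div_le_div_iff₀ (by positivity) (by positivity), one_mul,
      ← pow_add]
    apply pow_le_pow_right₀ hx1
    omega
  linarith

/-- Random bipartite graphs with constant edge probability `p` have near-perfect matchings: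
with probability at least `1 − 1/n^8` the random subgraph of `K_{n,n}` has a matching of
size at least `n − c·log n` with `c = 10/log(1/(1−p))`; consequently the expected maximum
matching size is at least `n − o(n)`. -/
theorem stmt9 (p : ℝ) (hp0 : 0 < p) (hp1 : p < 1) :
    ∃ N : ℕ, ∀ n : ℕ, N ≤ n →
      (1 - 1 / (n : ℝ) ^ 8 ≤
        ∑ S ∈ (bipEdges n).powerset,
          (if (n : ℝ) - (10 / Real.log (1 / (1 - p))) * Real.log n ≤ (matchNum S : ℝ) then
            p ^ S.card * (1 - p) ^ ((bipEdges n).card - S.card) else 0)) ∧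
      (1 - 1 / (n : ℝ) ^ 8) * ((n : ℝ) - (10 / Real.log (1 / (1 - p))) * Real.log n) ≤
        expMatch (bipEdges n) p := by
  classical
  have hq0 : (0 : ℝ) < 1 - p := by linarith
  have hq1 : (1 : ℝ) - p < 1 := by linarith
  have hlogq : Real.log (1 / (1 - p)) = -Real.log (1 - p) := by
    rw [one_div, Real.log_inv]
  have hlogneg : Real.log (1 - p) < 0 := Real.log_neg hq0 hq1
  have hL : 0 < Real.log (1 / (1 - p)) := by rw [hlogq]; linarith
  set c : ℝ := 10 / Real.log (1 / (1 - p)) with hc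
  have hc0 : 0 < c := by positivity
  refine ⟨max 4 (⌈(2 * c) ^ 2⌉₊ + 1), fun n hn => ?_⟩
  have hn4 : 4 ≤ n := le_trans (le_max_left _ _) hn
  have hx : (4 : ℝ) ≤ (n : ℝ) := by exact_mod_cast hn4
  have hx0 : (0 : ℝ) < (n : ℝ) := by linarith
  have hx1 : (1 : ℝ) ≤ (n : ℝ) := by linarith
  set k : ℝ := c * Real.log n with hk
  have hlogn0 : 0 ≤ Real.log n := Real.log_nonneg hx1
  have hk0 : 0 ≤ k := mul_nonneg hc0.le hlogn0
  -- k ≤ n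
  have hkn : k ≤ (n : ℝ) := by
    have hns : ((2 * c) ^ 2 : ℝ) ≤ (n : ℝ) := by
      have h1 : ⌈(2 * c) ^ 2⌉₊ + 1 ≤ n := le_trans (le_max_right _ _) hn
      have h2 : ((2 * c) ^ 2 : ℝ) ≤ (⌈(2 * c) ^ 2⌉₊ : ℝ) := Nat.le_ceil _
      have h3 : ((⌈(2 * c) ^ 2⌉₊ : ℕ) : ℝ) ≤ (n : ℝ) := by exact_mod_cast le_trans (Nat.le_succ _) h1
      linarith
    have hsq : 2 * c ≤ Real.sqrt n := by
      rw [show (2 * c : ℝ) = Real.sqrt ((2 * c) ^ 2) from (Real.sqrt_sq (by positivity)).symm]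
      exact Real.sqrt_le_sqrt hns
    have hlog2 : Real.log n ≤ 2 * Real.sqrt n := by
      have hs0 : (0 : ℝ) < Real.sqrt n := Real.sqrt_pos.mpr hx0
      have h1 : Real.log n = 2 * Real.log (Real.sqrt n) := by
        rw [Real.log_sqrt hx0.le]; ring
      have h2 : Real.log (Real.sqrt n) ≤ Real.sqrt n - 1 := Real.log_le_sub_one_of_pos hs0
      rw [h1]; linarith
    calc k = c * Real.log n := hk
      _ ≤ c * (2 * Real.sqrt n) := by
          apply mul_le_mul_of_nonneg_left hlog2 hc0.le
      _ = (2 * c) * Real.sqrt n := by ring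
      _ ≤ Real.sqrt n * Real.sqrt n := by
          apply mul_le_mul_of_nonneg_right hsq (Real.sqrt_nonneg _)
      _ = (n : ℝ) := Real.mul_self_sqrt hx0.le
  -- the key power estimate
  have hqk : (1 - p) ^ (⌊k⌋₊ + 1) ≤ (((n : ℝ) ^ (10 : ℕ))⁻¹) := by
    have e1 : (1 - p) ^ (⌊k⌋₊ + 1) = (1 - p) ^ (((⌊k⌋₊ + 1 : ℕ) : ℝ)) := by
      rw [Real.rpow_natCast]
    have e2 : (1 - p) ^ (((⌊k⌋₊ + 1 : ℕ) : ℝ)) ≤ (1 - p) ^ (k : ℝ) := by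
      apply Real.rpow_le_rpow_of_exponent_ge hq0 hq1.le
      push_cast
      exact (Nat.lt_floor_add_one k).le
    have e3 : (1 - p) ^ (k : ℝ) = (((n : ℝ) ^ (10 : ℕ))⁻¹) := by
      rw [Real.rpow_def_of_pos hq0]
      have hlq : Real.log (1 - p) ≠ 0 := ne_of_lt hlogneg
      have hlc : Real.log (1 - p) * c = -10 := by
        rw [hc, hlogq]
        field_simp
      have hck : Real.log (1 - p) * k = -10 * Real.log n := by
        rw [hk, ← mul_assoc, hlc]
      rw [hck]
      have : ((n : ℝ) ^ (10 : ℕ))⁻¹ = (n : ℝ) ^ (-(10 : ℝ)) := by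
        rw [← Real.rpow_natCast (n : ℝ) 10, ← Real.rpow_neg hx0.le]
        norm_num
      rw [this, Real.rpow_def_of_pos hx0]
      congr 1
      ring
    rw [e1]
    exact e2.trans (le_of_eq e3)
  -- bad sum bound
  have hbad : (∑ S ∈ (bipEdges n).powerset,
      (if ¬((n : ℝ) - k ≤ (matchNum S : ℝ)) then
        p ^ S.card * (1 - p) ^ ((bipEdges n).card - S.card) else 0)) ≤ 1 / (n : ℝ) ^ 8 := by
    refine (badSum_le p k hp0.le hp1.le hk0).trans ?_
    exact psum_le (1 - p) ⌊k⌋₊ hq0.le (by linarith) hqk hn4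
  -- total is one, so good sum is at least 1 - 1/n^8
  have htot : (∑ S ∈ (bipEdges n).powerset,
        (if (n : ℝ) - k ≤ (matchNum S : ℝ) then
          p ^ S.card * (1 - p) ^ ((bipEdges n).card - S.card) else 0))
      + (∑ S ∈ (bipEdges n).powerset,
        (if ¬((n : ℝ) - k ≤ (matchNum S : ℝ)) then
          p ^ S.card * (1 - p) ^ ((bipEdges n).card - S.card) else 0)) = 1 := by
    rw [← Finset.sum_add_distrib]
    refine Eq.trans ?_ (sum_w_one p (bipEdges n))
    apply Finset.sum_congr rfl
    intro S _
    by_cases h : (n : ℝ) - k ≤ (matchNum S : ℝ)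
    · rw [if_pos h, if_neg (not_not_intro h), add_zero]
    · rw [if_neg h, if_pos h, zero_add]
  have hgood : 1 - 1 / (n : ℝ) ^ 8 ≤ ∑ S ∈ (bipEdges n).powerset,
      (if (n : ℝ) - k ≤ (matchNum S : ℝ) then
        p ^ S.card * (1 - p) ^ ((bipEdges n).card - S.card) else 0) := by
    linarith
  refine ⟨hgood, ?_⟩
  -- second part
  have hwnn : ∀ S : Finset (Finset (Fin n ⊕ Fin n)),
      0 ≤ p ^ S.card * (1 - p) ^ ((bipEdges n).card - S.card) := fun S =>
    mul_nonneg (pow_nonneg hp0.le _) (pow_nonneg hq0.le _)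
  have step : ∑ S ∈ (bipEdges n).powerset,
      (if (n : ℝ) - k ≤ (matchNum S : ℝ) then
        p ^ S.card * (1 - p) ^ ((bipEdges n).card - S.card) else 0) * ((n : ℝ) - k)
      ≤ expMatch (bipEdges n) p := by
    rw [expMatch]
    apply Finset.sum_le_sum
    intro S _
    by_cases h : (n : ℝ) - k ≤ (matchNum S : ℝ)
    · rw [if_pos h]
      exact mul_le_mul_of_nonneg_left h (hwnn S)
    · rw [if_neg h, zero_mul]
      exact mul_nonneg (hwnn S) (Nat.cast_nonneg _)
  rw [← Finset.sum_mul] at step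
  calc (1 - 1 / (n : ℝ) ^ 8) * ((n : ℝ) - c * Real.log n)
      ≤ (∑ S ∈ (bipEdges n).powerset,
          (if (n : ℝ) - k ≤ (matchNum S : ℝ) then
            p ^ S.card * (1 - p) ^ ((bipEdges n).card - S.card) else 0)) * ((n : ℝ) - k) := by
        apply mul_le_mul_of_nonneg_right hgood
        show (0 : ℝ) ≤ (n : ℝ) - k
        linarith
    _ ≤ expMatch (bipEdges n) p := step
end

section
/- In the complete bipartite random graph argument: for any constant p ∈ (0,1) and c = 10/log(1/(1−p)), the sum ∑_{s=1}^{n − c·log n} binom(n, s)·binom(n, s−1)·(1−p)^{s(n−s+1)} is at most e^{−(n/2)·log(1/(1−p))} for sufficiently large n. -/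
open Finset

set_option maxHeartbeats 1000000 in
/-- The union-bound computation in the near-perfect-matching proof for random bipartite
graphs: for constant `p ∈ (0,1)` and `c = 10/log(1/(1−p))`, the sum
`∑_{s=1}^{n − c·log n} C(n,s)·C(n,s−1)·(1−p)^{s(n−s+1)}` is at most
`e^{−(n/2)·log(1/(1−p))}` for sufficiently large `n`. -/
theorem stmt10 (p : ℝ) (hp0 : 0 < p) (hp1 : p < 1) :
    ∃ N : ℕ, ∀ n : ℕ, N ≤ n →
      ∑ s ∈ Finset.Icc 1 ⌊(n : ℝ) - (10 / Real.log (1 / (1 - p))) * Real.log n⌋₊,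
          ((n.choose s : ℝ) * (n.choose (s - 1) : ℝ) * (1 - p) ^ (s * (n - s + 1)))
        ≤ Real.exp (-((n : ℝ) / 2) * Real.log (1 / (1 - p))) := by
  have hq0 : (0:ℝ) < 1 - p := by linarith
  set L := Real.log (1 / (1 - p)) with hLdef
  have hL : 0 < L := Real.log_pos (by rw [one_lt_div hq0]; linarith)
  have hlogq : Real.log (1 - p) = -L := by
    rw [hLdef, one_div, Real.log_inv, neg_neg]
  rw [← Filter.eventually_atTop]
  have h1 : ∀ᶠ n : ℕ in Filter.atTop, Real.log n ≤ L / 24 * n := by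
    have hb := Real.isLittleO_log_id_atTop.def (show (0:ℝ) < L/24 by positivity)
    filter_upwards [(tendsto_natCast_atTop_atTop (R := ℝ)).eventually hb] with n hn
    calc Real.log n ≤ |Real.log n| := le_abs_self _
      _ ≤ L/24 * |(n:ℝ)| := by simpa using hn
      _ = L/24 * n := by rw [abs_of_nonneg (Nat.cast_nonneg n)]
  have h2 : ∀ᶠ n : ℕ in Filter.atTop, Real.exp L ≤ (n:ℝ) :=
    (tendsto_natCast_atTop_atTop (R := ℝ)).eventually_ge_atTop _
  filter_upwards [h1, h2, Filter.eventually_ge_atTop 3] with n hlog hexp hn3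
  have hn1 : (1:ℝ) ≤ n := by
    have : (3:ℝ) ≤ n := by exact_mod_cast hn3
    linarith
  have hn0 : (0:ℝ) < n := by linarith
  set ℓ := Real.log (n:ℝ) with hldef
  have hℓ0 : 0 ≤ ℓ := Real.log_nonneg hn1
  have hLℓ : L ≤ ℓ := (Real.le_log_iff_exp_le hn0).mpr hexp
  set M := ⌊(n : ℝ) - (10 / L) * ℓ⌋₊ with hM
  have hc : (10 / L) * ℓ ≤ (n:ℝ) / 2 := by
    have h10 : (10 / L) * ℓ ≤ (10/L) * (L/24 * n) :=
      mul_le_mul_of_nonneg_left hlog (by positivity)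
    have hLne : L ≠ 0 := hL.ne'
    have : (10/L) * (L/24 * (n:ℝ)) = 10/24 * n := by field_simp
    rw [this] at h10
    linarith
  have hMr : (M:ℝ) ≤ (n:ℝ) - (10/L) * ℓ := Nat.floor_le (by linarith)
  have hMn : M ≤ n := by
    have hnn : (0:ℝ) ≤ (10/L) * ℓ := by positivity
    have : (M:ℝ) ≤ (n:ℝ) := by linarith
    exact_mod_cast this
  have hnpow : ∀ m : ℕ, (n:ℝ)^m = Real.exp ((m:ℝ) * ℓ) := by
    intro m
    rw [Real.exp_nat_mul, hldef, Real.exp_log hn0]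
  have hqpow : ∀ k : ℕ, ((1:ℝ) - p) ^ k = Real.exp ((k:ℝ) * (-L)) := by
    intro k
    rw [Real.exp_nat_mul, ← hlogq, Real.exp_log hq0]
  have key : ∀ s ∈ Finset.Icc 1 M,
      ((n.choose s : ℝ) * (n.choose (s - 1) : ℝ) * (1 - p) ^ (s * (n - s + 1)))
        ≤ Real.exp (-((n:ℝ)/2) * L - ℓ) := by
    intro s hs
    obtain ⟨hs1, hsM⟩ := Finset.mem_Icc.mp hs
    have hsn : s ≤ n := le_trans hsM hMn
    have hx1 : (1:ℝ) ≤ s := by exact_mod_cast hs1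
    have hx0 : (0:ℝ) ≤ s := by linarith
    have hcs : (n.choose s : ℝ) ≤ (n:ℝ)^s := by exact_mod_cast Nat.choose_le_pow n s
    have hcs' : (n.choose (s-1) : ℝ) ≤ (n:ℝ)^s := by
      have ha : (n.choose (s-1) : ℝ) ≤ (n:ℝ)^(s-1) := by
        exact_mod_cast Nat.choose_le_pow n (s-1)
      have hb : (n:ℝ)^(s-1) ≤ (n:ℝ)^s := pow_le_pow_right₀ hn1 (Nat.sub_le s 1)
      linarith
    calc (n.choose s : ℝ) * (n.choose (s-1) : ℝ) * (1-p)^(s*(n-s+1))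
        ≤ (n:ℝ)^s * (n:ℝ)^s * Real.exp (((s*(n-s+1) : ℕ):ℝ) * (-L)) := by
          rw [hqpow]
          apply mul_le_mul_of_nonneg_right _ (Real.exp_pos _).le
          exact mul_le_mul hcs hcs' (Nat.cast_nonneg _) (by positivity)
      _ = Real.exp ((s:ℝ)*ℓ + (s:ℝ)*ℓ + ((s*(n-s+1):ℕ):ℝ)*(-L)) := by
          rw [hnpow, ← Real.exp_add, ← Real.exp_add]
      _ ≤ Real.exp (-((n:ℝ)/2)*L - ℓ) := by
          rw [Real.exp_le_exp]
          have hk : ((s*(n-s+1) : ℕ):ℝ) = (s:ℝ) * ((n:ℝ) - s + 1) := by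
            push_cast [Nat.cast_sub hsn]
            ring
          rw [hk]
          have hxM : (s:ℝ) ≤ (n:ℝ) - (10/L)*ℓ := by
            have h' : (s:ℝ) ≤ (M:ℝ) := by exact_mod_cast hsM
            linarith
          have hy3 : (3:ℝ) ≤ (n:ℝ) := by exact_mod_cast hn3
          have hLy : 0 ≤ L * (n:ℝ) := mul_nonneg hL.le (by linarith)
          rcases le_or_gt (s:ℝ) ((n:ℝ)/4) with hcase | hcase
          · have A1 : 0 ≤ L * (s:ℝ) * ((n:ℝ)/4 - (s:ℝ) + 1) := by
              apply mul_nonneg (mul_nonneg hL.le hx0); linarith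
            have B1 : 0 ≤ ((s:ℝ) - 1) * (3/4*L*(n:ℝ) - 2*ℓ) := by
              apply mul_nonneg (by linarith); linarith
            have C1 : 0 ≤ 1/4*L*(n:ℝ) - 3*ℓ := by linarith
            linarith [A1, B1, C1]
          · have h10 : 10*ℓ ≤ L*((n:ℝ) - (s:ℝ)) := by
              have hxy : (10/L)*ℓ ≤ (n:ℝ) - (s:ℝ) := by linarith
              have heq : 10*ℓ = L*((10/L)*ℓ) := by field_simp
              rw [heq]
              exact mul_le_mul_of_nonneg_left hxy hL.le
            have A : 0 ≤ (s:ℝ) * (L*((n:ℝ) - (s:ℝ) + 1) - 10*ℓ) := by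
              apply mul_nonneg hx0
              have : L*((n:ℝ) - (s:ℝ) + 1) = L*((n:ℝ) - (s:ℝ)) + L := by ring
              linarith
            have B : 0 ≤ ((s:ℝ) - (n:ℝ)/4) * (8*ℓ) := mul_nonneg (by linarith) (by linarith)
            have C : 0 ≤ (n:ℝ)*(ℓ - L/2) := mul_nonneg (by linarith) (by linarith)
            have D : 0 ≤ ((n:ℝ) - 1)*ℓ := mul_nonneg (by linarith) hℓ0
            linarith [A, B, C, D]
  calc ∑ s ∈ Finset.Icc 1 M,
        ((n.choose s : ℝ) * (n.choose (s - 1) : ℝ) * (1 - p) ^ (s * (n - s + 1)))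
      ≤ ∑ _s ∈ Finset.Icc 1 M, Real.exp (-((n:ℝ)/2) * L - ℓ) := Finset.sum_le_sum key
    _ = (M:ℝ) * Real.exp (-((n:ℝ)/2) * L - ℓ) := by
        rw [Finset.sum_const, Nat.card_Icc, nsmul_eq_mul]
        simp
    _ ≤ (n:ℝ) * Real.exp (-((n:ℝ)/2) * L - ℓ) := by
        apply mul_le_mul_of_nonneg_right _ (Real.exp_pos _).le
        exact_mod_cast hMn
    _ = Real.exp (-((n:ℝ)/2) * L) := by
        rw [Real.exp_sub, hldef, Real.exp_log hn0]
        field_simp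
end
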